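/- arXiv:2403.02811 — 8 statements merged into one kernel-verified Lean document; each statement's English description precedes it below -/
import Mathlib

section
/- Let H and F be real Hilbert spaces, let S : H → F be a bounded linear operator, let Π be an orthogonal projection on H, and let γ > 0. Then S Π S* + γ I is invertible and ‖(S Π S* + γ I)⁻¹ S Π‖ ≤ γ^{-1/2}, where ‖·‖ denotes the operator norm. -/
open ContinuousLinearMap

set_option maxHeartbeats 1000000 in
/-- `S Π S* + γ I` is invertible and `‖(S Π S* + γ I)⁻¹ S Π‖ ≤ γ^{-1/2}`. -/
theorem stmt_1
    {H F : Type*}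
    [NormedAddCommGroup H] [InnerProductSpace ℝ H] [CompleteSpace H]
    [NormedAddCommGroup F] [InnerProductSpace ℝ F] [CompleteSpace F]
    (S : H →L[ℝ] F)
    (P : H →L[ℝ] H) (hP_idem : P ∘L P = P) (hP_sa : IsSelfAdjoint P)
    (γ : ℝ) (hγ : 0 < γ) :
    IsUnit (S ∘L P ∘L adjoint S + γ • (1 : F →L[ℝ] F)) ∧
    ‖Ring.inverse (S ∘L P ∘L adjoint S + γ • (1 : F →L[ℝ] F)) ∘L S ∘L P‖ ≤
      γ ^ (-(1 : ℝ) / 2) := by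
  set T : H →L[ℝ] F := S ∘L P with hT
  have hPP : ∀ x, P (P x) = P x := fun x => DFunLike.congr_fun hP_idem x
  have hTadj : adjoint T = P ∘L adjoint S := by
    rw [hT, adjoint_comp, hP_sa.adjoint_eq]
  have hA_eq : S ∘L P ∘L adjoint S + γ • (1 : F →L[ℝ] F)
      = T ∘L adjoint T + γ • 1 := by
    congr 1
    rw [hTadj]
    ext x
    simp [hT, hPP]
  rw [hA_eq]
  set A : F →L[ℝ] F := T ∘L adjoint T + γ • 1 with hA
  have hAsa : IsSelfAdjoint A := by
    rw [IsSelfAdjoint, star_eq_adjoint, hA, map_add, adjoint_comp, adjoint_adjoint]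
    congr 1
    rw [map_smul]
    congr 1
    rw [← star_eq_adjoint, star_one]
  -- coercivity
  have h1 : ∀ v : F, (inner ℝ (A v) v : ℝ) = ‖adjoint T v‖ ^ 2 + γ * ‖v‖ ^ 2 := by
    intro v
    rw [hA]
    simp only [add_apply, comp_apply, smul_apply, ContinuousLinearMap.one_apply, inner_add_left,
      real_inner_smul_left]
    rw [real_inner_self_eq_norm_sq]
    congr 1
    rw [← adjoint_inner_right, real_inner_self_eq_norm_sq]
  have hcoer : IsCoercive ((innerSL ℝ).comp A) := by
    refine ⟨γ, hγ, fun v => ?_⟩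
    simp only [ContinuousLinearMap.comp_apply, innerSL_apply_apply]
    rw [h1]
    nlinarith [sq_nonneg ‖adjoint T v‖, sq_nonneg ‖v‖]
  have hBA : InnerProductSpace.continuousLinearMapOfBilin ((innerSL ℝ).comp A) = A := by
    ext v
    refine ext_inner_right ℝ fun w => ?_
    rw [InnerProductSpace.continuousLinearMapOfBilin_apply]
    simp
  have hUnit : IsUnit A := by
    rw [isUnit_iff_bijective]
    have hbij : Function.Bijective (hcoer.continuousLinearEquivOfBilin) :=
      hcoer.continuousLinearEquivOfBilin.bijective
    have hco : ⇑(hcoer.continuousLinearEquivOfBilin) = ⇑A := by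
      funext v
      exact DFunLike.congr_fun hBA v
    rwa [hco] at hbij
  refine ⟨hUnit, ?_⟩
  set u : F →L[ℝ] F := Ring.inverse A with hu
  have hAu : A * u = 1 := Ring.mul_inverse_cancel A hUnit
  have hu_sa : IsSelfAdjoint u := by
    rw [IsSelfAdjoint, hu, ← Ring.inverse_star, hAsa.star_eq]
  clear_value u A T
  have hrpow : (γ ^ (-(1 : ℝ) / 2)) ^ 2 = γ⁻¹ := by
    rw [← Real.rpow_natCast (γ ^ (-(1 : ℝ) / 2)) 2, ← Real.rpow_mul hγ.le]
    norm_num [Real.rpow_neg_one]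
  have hrnn : (0 : ℝ) ≤ γ ^ (-(1 : ℝ) / 2) := Real.rpow_nonneg hγ.le _
  -- key estimate
  have key : ∀ x : F, ‖adjoint T x‖ ≤ γ ^ (-(1 : ℝ) / 2) * ‖A x‖ := by
    intro x
    have h2 : (inner ℝ (A x) x : ℝ) = ‖adjoint T x‖ ^ 2 + γ * ‖x‖ ^ 2 := h1 x
    have hIy : (inner ℝ (A x) x : ℝ) ≤ ‖A x‖ * ‖x‖ := real_inner_le_norm _ _
    have hxle : γ * ‖x‖ ≤ ‖A x‖ := by
      rcases (norm_nonneg x).eq_or_lt' with h0 | h0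
      · rw [h0, mul_zero]; exact norm_nonneg _
      · nlinarith [sq_nonneg ‖adjoint T x‖]
    have hT2 : ‖adjoint T x‖ ^ 2 ≤ γ⁻¹ * ‖A x‖ ^ 2 := by
      have hxy : ‖x‖ ≤ γ⁻¹ * ‖A x‖ := by
        rw [inv_mul_eq_div, le_div_iff₀ hγ, mul_comm]
        exact hxle
      nlinarith [norm_nonneg x, norm_nonneg (A x), norm_nonneg (adjoint T x)]
    have hsq : ‖adjoint T x‖ ^ 2 ≤ (γ ^ (-(1 : ℝ) / 2) * ‖A x‖) ^ 2 := by
      rw [mul_pow, hrpow]; exact hT2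
    have hfin := Real.sqrt_le_sqrt hsq
    rwa [Real.sqrt_sq (norm_nonneg _),
      Real.sqrt_sq (mul_nonneg hrnn (norm_nonneg _))] at hfin
  have claim : ∀ y : F, ‖adjoint T (u y)‖ ≤ γ ^ (-(1 : ℝ) / 2) * ‖y‖ := by
    intro y
    have hyx : A (u y) = y := by
      have h := DFunLike.congr_fun hAu y
      simpa [mul_apply] using h
    have h := key (u y)
    rwa [hyx] at h
  have hcomp : ‖adjoint T ∘L u‖ ≤ γ ^ (-(1 : ℝ) / 2) :=
    opNorm_le_bound _ hrnn claim
  have hnorm : ‖u ∘L T‖ = ‖adjoint T ∘L u‖ := by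
    rw [← LinearIsometryEquiv.norm_map (ContinuousLinearMap.adjoint) (u ∘L T),
      adjoint_comp, hu_sa.adjoint_eq]
  rw [hnorm]
  exact hcomp
end

section
/- Let H₁ be a real Hilbert space and E = ℝ^{n_u}. Let A : H₁ → H₁ and B : E → H₁ be bounded linear operators, let R : E → E be self-adjoint positive definite, let Q : H₁ → H₁ be bounded self-adjoint, and set N := B R⁻¹ B*. Let P and X be bounded self-adjoint operators on H₁ with P positive semidefinite, and suppose I + N P and I + N(P + X) are invertible. Define F(M) := M − A* M (I + N M)⁻¹ A − Q for M ∈ {P, P+X}, K := −(R + B* P B)⁻¹ B* P A, and L := A + B K. If F(P) = 0, then F(P + X) = X − L* X L + L* X (I + N(P + X))⁻¹ N X L. -/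
open ContinuousLinearMap
open scoped RealInnerProductSpace
set_option maxHeartbeats 1000000

lemma aux_unit {n : ℕ} (T : EuclideanSpace ℝ (Fin n) →L[ℝ] EuclideanSpace ℝ (Fin n))
    (hpos : ∀ u, u ≠ 0 → 0 < ⟪T u, u⟫) : IsUnit T := by
  have hinj : Function.Injective T := by
    rw [injective_iff_map_eq_zero]
    intro a ha
    by_contra h
    have := hpos a h
    rw [ha] at this
    simp at this
  have hbij : Function.Bijective (T : EuclideanSpace ℝ (Fin n) →ₗ[ℝ] EuclideanSpace ℝ (Fin n)) :=
    ⟨hinj, LinearMap.injective_iff_surjective.mp hinj⟩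
  let e := LinearEquiv.ofBijective (T : EuclideanSpace ℝ (Fin n) →ₗ[ℝ] EuclideanSpace ℝ (Fin n)) hbij
  have : IsUnit ((e.toContinuousLinearEquiv.toUnit : (_ →L[ℝ] _)ˣ) : EuclideanSpace ℝ (Fin n) →L[ℝ] EuclideanSpace ℝ (Fin n)) := Units.isUnit _
  convert this using 2
  exact ContinuousLinearMap.ext fun x => rfl

/-- Decomposition of the perturbed discrete algebraic Riccati map:
`F(P+X) = X - L* X L + L* X (I + N(P+X))⁻¹ N X L` when `F(P) = 0`. -/
theorem stmt_3
    {H₁ : Type*} [NormedAddCommGroup H₁] [InnerProductSpace ℝ H₁] [CompleteSpace H₁]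
    {n : ℕ}
    (A : H₁ →L[ℝ] H₁) (B : EuclideanSpace ℝ (Fin n) →L[ℝ] H₁)
    (R : EuclideanSpace ℝ (Fin n) →L[ℝ] EuclideanSpace ℝ (Fin n))
    (hR_sa : IsSelfAdjoint R) (hR_pos : ∀ u, u ≠ 0 → 0 < ⟪R u, u⟫)
    (Q : H₁ →L[ℝ] H₁) (hQ_sa : IsSelfAdjoint Q)
    (N : H₁ →L[ℝ] H₁) (hN : N = B ∘L Ring.inverse R ∘L adjoint B)
    (P X : H₁ →L[ℝ] H₁)
    (hP_sa : IsSelfAdjoint P) (hX_sa : IsSelfAdjoint X)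
    (hP_pos : ∀ x, 0 ≤ ⟪P x, x⟫)
    (h1 : IsUnit ((1 : H₁ →L[ℝ] H₁) + N ∘L P))
    (h2 : IsUnit ((1 : H₁ →L[ℝ] H₁) + N ∘L (P + X)))
    (Fric : (H₁ →L[ℝ] H₁) → (H₁ →L[ℝ] H₁))
    (hF : ∀ M, Fric M =
      M - adjoint A ∘L M ∘L Ring.inverse ((1 : H₁ →L[ℝ] H₁) + N ∘L M) ∘L A - Q)
    (K : H₁ →L[ℝ] EuclideanSpace ℝ (Fin n))
    (hK : K = -(Ring.inverse (R + adjoint B ∘L P ∘L B) ∘L adjoint B ∘L P ∘L A))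
    (L : H₁ →L[ℝ] H₁) (hL : L = A + B ∘L K)
    (hP0 : Fric P = 0) :
    Fric (P + X) = X - adjoint L ∘L X ∘L L
      + adjoint L ∘L X ∘L Ring.inverse ((1 : H₁ →L[ℝ] H₁) + N ∘L (P + X)) ∘L N ∘L X ∘L L := by

  have hRu : IsUnit R := aux_unit R hR_pos
  set G : EuclideanSpace ℝ (Fin n) →L[ℝ] EuclideanSpace ℝ (Fin n) :=
    R + adjoint B ∘L P ∘L B with hGdef
  have hGu : IsUnit G := by
    apply aux_unit
    intro u hu
    have h1' := hR_pos u hu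
    have h2' : (0:ℝ) ≤ ⟪P (B u), B u⟫ := hP_pos _
    have h3' : ⟪(adjoint B ∘L P ∘L B) u, u⟫ = ⟪P (B u), B u⟫ := by
      simp [ContinuousLinearMap.comp_apply, ContinuousLinearMap.adjoint_inner_left]
    rw [hGdef]
    simp only [ContinuousLinearMap.add_apply, inner_add_left, h3']
    linarith
  -- pointwise inverse facts
  have hrinv : ∀ v, Ring.inverse R (R v) = v := by
    intro v
    have h := Ring.inverse_mul_cancel R hRu
    calc Ring.inverse R (R v) = (Ring.inverse R * R) v := rfl
      _ = v := by rw [h]; rfl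
  have hGinv : ∀ v, G (Ring.inverse G v) = v := by
    intro v
    have h := Ring.mul_inverse_cancel G hGu
    calc G (Ring.inverse G v) = (G * Ring.inverse G) v := rfl
      _ = v := by rw [h]; rfl
  -- Woodbury: (1 + N P) L = A
  have hGapp : ∀ w, G w = R w + adjoint B (P (B w)) := by
    intro w; rw [hGdef]; rfl
  have hEL : ((1 : H₁ →L[ℝ] H₁) + N ∘L P) ∘L L = A := by
    ext x
    set u := adjoint B (P (A x)) with hu
    have hKx : K x = - Ring.inverse G u := by
      rw [hK]; rfl
    set w := Ring.inverse G u with hw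
    have hg2 : R w + adjoint B (P (B w)) = u := by rw [← hGapp]; exact hGinv u
    have h5 : adjoint B (P (B (K x))) = R w - u := by
      rw [hKx, ContinuousLinearMap.map_neg B, ContinuousLinearMap.map_neg P,
        ContinuousLinearMap.map_neg (adjoint B), ← hg2, sub_add_cancel_left]
    have hLx : L x = A x + B (K x) := by rw [hL]; rfl
    show L x + N (P (L x)) = A x
    rw [hN]
    show L x + B (Ring.inverse R (adjoint B (P (L x)))) = A x
    rw [hLx, ContinuousLinearMap.map_add P, ContinuousLinearMap.map_add (adjoint B), ← hu, h5]
    have h6 : u + (R w - u) = R w := by abel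
    rw [h6, hrinv, hKx, ContinuousLinearMap.map_neg B, neg_add_cancel_right]
  -- self-adjointness facts
  have hr'sa : star (Ring.inverse R) = Ring.inverse R := by
    rw [← Ring.inverse_star, hR_sa.star_eq]
  have hNsa : star N = N := by
    rw [ContinuousLinearMap.star_eq_adjoint, hN, ContinuousLinearMap.adjoint_comp,
      ContinuousLinearMap.adjoint_comp, ContinuousLinearMap.adjoint_adjoint,
      ← ContinuousLinearMap.star_eq_adjoint (Ring.inverse R), hr'sa]
    rw [ContinuousLinearMap.comp_assoc]
  -- move to multiplicative notation
  simp only [← ContinuousLinearMap.mul_def] at hEL h1 h2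
  rw [hF] at hP0 ⊢
  simp only [← ContinuousLinearMap.mul_def, ← ContinuousLinearMap.star_eq_adjoint] at hP0 ⊢
  have hEe : ((1:H₁ →L[ℝ] H₁) + N * P) * Ring.inverse (1 + N * P) = 1 :=
    Ring.mul_inverse_cancel _ h1
  have heE : Ring.inverse ((1:H₁ →L[ℝ] H₁) + N * P) * (1 + N * P) = 1 :=
    Ring.inverse_mul_cancel _ h1
  have hSs : ((1:H₁ →L[ℝ] H₁) + N * (P + X)) * Ring.inverse (1 + N * (P + X)) = 1 :=
    Ring.mul_inverse_cancel _ h2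
  have hsS : Ring.inverse ((1:H₁ →L[ℝ] H₁) + N * (P + X)) * (1 + N * (P + X)) = 1 :=
    Ring.inverse_mul_cancel _ h2
  have hstarE : star ((1:H₁ →L[ℝ] H₁) + N * P) = 1 + P * N := by
    rw [star_add, star_one, star_mul, hNsa, hP_sa.star_eq]
  have hFu : IsUnit ((1:H₁ →L[ℝ] H₁) + P * N) := by rw [← hstarE]; exact h1.star
  have hFf : ((1:H₁ →L[ℝ] H₁) + P * N) * Ring.inverse (1 + P * N) = 1 :=
    Ring.mul_inverse_cancel _ hFu
  have hfF : Ring.inverse ((1:H₁ →L[ℝ] H₁) + P * N) * (1 + P * N) = 1 :=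
    Ring.inverse_mul_cancel _ hFu
  set e := Ring.inverse ((1:H₁ →L[ℝ] H₁) + N * P) with hedef
  set s := Ring.inverse ((1:H₁ →L[ℝ] H₁) + N * (P + X)) with hsdef
  set f := Ring.inverse ((1:H₁ →L[ℝ] H₁) + P * N) with hfdef
  have hLe : L = e * A := by
    calc L = (e * (1 + N * P)) * L := by rw [heE, one_mul]
      _ = e * ((1 + N * P) * L) := by rw [mul_assoc]
      _ = e * A := by rw [hEL]
  have hLstar : star L = star A * f := by
    have h' : star L * (1 + P * N) = star A := by rw [← hstarE, ← star_mul, hEL]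
    calc star L = star L * ((1 + P * N) * f) := by rw [hFf, mul_one]
      _ = (star L * (1 + P * N)) * f := by rw [mul_assoc]
      _ = star A * f := by rw [h']
  have hfP : f * P = P * e := by
    have h' : P * (1 + N * P) = (1 + P * N) * P := by noncomm_ring
    calc f * P = f * P * ((1 + N * P) * e) := by rw [hEe, mul_one]
      _ = (f * (P * (1 + N * P))) * e := by noncomm_ring
      _ = (f * ((1 + P * N) * P)) * e := by rw [h']
      _ = ((f * (1 + P * N)) * P) * e := by noncomm_ring
      _ = P * e := by rw [hfF, one_mul]
  have hC : f * X * s = (P + X) * s - P * e := by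
    have hXid : ((1:H₁ →L[ℝ] H₁) + P * N) * (P + X) - P * (1 + N * (P + X)) = X := by
      noncomm_ring
    calc f * X * s
        = f * (((1:H₁ →L[ℝ] H₁) + P * N) * (P + X) - P * (1 + N * (P + X))) * s := by rw [hXid]
      _ = (f * (1 + P * N)) * ((P + X) * s) - (f * P) * ((1 + N * (P + X)) * s) := by noncomm_ring
      _ = (P + X) * s - P * e := by rw [hfF, hSs, hfP, one_mul, mul_one]
  have h4 : s * (N * X) * e = e - s := by
    have hSE : ((1:H₁ →L[ℝ] H₁) + N * (P + X)) - (1 + N * P) = N * X := by noncomm_ring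
    calc s * (N * X) * e
        = s * (((1:H₁ →L[ℝ] H₁) + N * (P + X)) - (1 + N * P)) * e := by rw [hSE]
      _ = (s * (1 + N * (P + X))) * e - s * ((1 + N * P) * e) := by noncomm_ring
      _ = e - s := by rw [hsS, hEe, one_mul, mul_one]
  have hmid : f * X * (s * (N * X) * e) = f * X * e - ((P + X) * s - P * e) := by
    calc f * X * (s * (N * X) * e) = f * X * (e - s) := by rw [h4]
      _ = f * X * e - f * X * s := by noncomm_ring
      _ = f * X * e - ((P + X) * s - P * e) := by rw [hC]
  have hQ : Q = P - star A * (P * (e * A)) := (sub_eq_zero.mp hP0).symm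
  rw [hQ, hLstar, hLe]
  calc P + X - star A * ((P + X) * (s * A)) - (P - star A * (P * (e * A)))
      = X - star A * (f * X * e) * A + star A * (f * X * e - ((P + X) * s - P * e)) * A := by
        noncomm_ring
    _ = X - star A * (f * X * e) * A + star A * (f * X * (s * (N * X) * e)) * A := by rw [hmid]
    _ = X - (star A * f) * (X * (e * A)) + (star A * f) * (X * (s * (N * (X * (e * A))))) := by
        noncomm_ring
end

section
/- Let H be a real Hilbert space and let N, M : H → H be bounded self-adjoint positive semidefinite operators such that I + M N is invertible. Then ‖N (I + M N)⁻¹‖ ≤ ‖N‖, where ‖·‖ denotes the operator norm. -/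
open ContinuousLinearMap
open scoped RealInnerProductSpace

/-- For positive semidefinite `N`, `M` with `I + M N` invertible, `‖N (I + M N)⁻¹‖ ≤ ‖N‖`. -/
theorem stmt_7
    {H : Type*} [NormedAddCommGroup H] [InnerProductSpace ℝ H] [CompleteSpace H]
    (N M : H →L[ℝ] H)
    (hN_sa : IsSelfAdjoint N) (hM_sa : IsSelfAdjoint M)
    (hN_pos : ∀ x, 0 ≤ ⟪N x, x⟫) (hM_pos : ∀ x, 0 ≤ ⟪M x, x⟫)
    (h : IsUnit ((1 : H →L[ℝ] H) + M ∘L N)) :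
    ‖N ∘L Ring.inverse ((1 : H →L[ℝ] H) + M ∘L N)‖ ≤ ‖N‖ := by
  set T : H →L[ℝ] H := Ring.inverse ((1 : H →L[ℝ] H) + M ∘L N) with hTdef
  set A : H →L[ℝ] H := N ∘L T with hAdef
  have hNs := (ContinuousLinearMap.isSelfAdjoint_iff_isSymmetric.mp hN_sa)
  have hMs := (ContinuousLinearMap.isSelfAdjoint_iff_isSymmetric.mp hM_sa)
  have hNs' : ∀ u v : H, ⟪N u, v⟫ = ⟪u, N v⟫ := fun u v => hNs u v
  have hMs' : ∀ u v : H, ⟪M u, v⟫ = ⟪u, M v⟫ := fun u v => hMs u v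
  -- every x decomposes as x = T x + M (N (T x))
  have hx : ∀ x : H, x = T x + M (N (T x)) := by
    intro x
    have := congrArg (fun f : H →L[ℝ] H => f x) (Ring.mul_inverse_cancel _ h)
    simp only [ContinuousLinearMap.mul_apply, ContinuousLinearMap.add_apply,
      ContinuousLinearMap.one_apply, ContinuousLinearMap.comp_apply] at this
    exact this.symm
  have hAx : ∀ x : H, A x = N (T x) := fun x => rfl
  -- nonnegativity of the form ⟪A x, x⟫
  have h1 : ∀ x : H, 0 ≤ ⟪A x, x⟫ := by
    intro x
    set y := T x with hy
    have hxy : x = y + M (N y) := hx x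
    rw [hAx, ← hy, hxy, inner_add_right]
    have e2 : ⟪N y, M (N y)⟫ = ⟪M (N y), N y⟫ := real_inner_comm _ _
    rw [e2]
    exact add_nonneg (hN_pos y) (hM_pos (N y))
  -- the form is dominated by the form of N
  have h2 : ∀ x : H, ⟪A x, x⟫ ≤ ⟪N x, x⟫ := by
    intro x
    set y := T x with hy
    have hxy : x = y + M (N y) := hx x
    have lhs : ⟪A x, x⟫ = ⟪N y, y⟫ + ⟪N y, M (N y)⟫ := by
      rw [hAx, ← hy, hxy, inner_add_right]
    have rhs : ⟪N x, x⟫ = ⟪N y, y⟫ + ⟪N y, M (N y)⟫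
        + (⟪N y, M (N y)⟫ + ⟪N (M (N y)), M (N y)⟫) := by
      nth_rewrite 1 [hxy]
      nth_rewrite 1 [hxy]
      rw [map_add, inner_add_left, inner_add_right, inner_add_right]
      have : ⟪N (M (N y)), y⟫ = ⟪N y, M (N y)⟫ := by
        rw [hNs' (M (N y)) y]
        exact real_inner_comm _ _
      rw [this]
    rw [lhs, rhs]
    have a1 : 0 ≤ ⟪N y, M (N y)⟫ := by
      rw [real_inner_comm]; exact hM_pos (N y)
    have a2 : 0 ≤ ⟪N (M (N y)), M (N y)⟫ := hN_pos _
    linarith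
  -- symmetry of the form ⟪A x, z⟫
  have hsym : ∀ x z : H, ⟪A x, z⟫ = ⟪A z, x⟫ := by
    intro x z
    set y := T x with hy
    set w := T z with hw
    have hxy : x = y + M (N y) := hx x
    have hzw : z = w + M (N w) := hx z
    rw [hAx x, hAx z, ← hy, ← hw, hzw, hxy]
    rw [inner_add_right, inner_add_right]
    congr 1
    · rw [hNs' y w, real_inner_comm]
    · rw [← hMs' (N y) (N w), real_inner_comm, ← hMs' (N w) (N y), real_inner_comm]
  -- bound the form of N by ‖N‖
  have h3 : ∀ x : H, ⟪A x, x⟫ ≤ ‖N‖ * (‖x‖ * ‖x‖) := by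
    intro x
    refine (h2 x).trans ?_
    calc ⟪N x, x⟫ ≤ ‖N x‖ * ‖x‖ := real_inner_le_norm _ _
      _ ≤ (‖N‖ * ‖x‖) * ‖x‖ := by
          exact mul_le_mul_of_nonneg_right (N.le_opNorm x) (norm_nonneg x)
      _ = ‖N‖ * (‖x‖ * ‖x‖) := by ring
  -- Cauchy–Schwarz for the form
  have cs : ∀ x : H, (‖A x‖ * ‖A x‖) * (‖A x‖ * ‖A x‖) ≤ ⟪A (A x), A x⟫ * ⟪A x, x⟫ := by
    intro x
    have hq : ∀ t : ℝ, 0 ≤ ⟪A (A x), A x⟫ * (t * t)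
        + (2 * (‖A x‖ * ‖A x‖)) * t + ⟪A x, x⟫ := by
      intro t
      have := h1 (x + t • A x)
      have expand : ⟪A (x + t • A x), x + t • A x⟫
          = ⟪A (A x), A x⟫ * (t * t) + (2 * (‖A x‖ * ‖A x‖)) * t + ⟪A x, x⟫ := by
        rw [map_add, map_smul, inner_add_left, inner_add_right, inner_add_right,
          inner_smul_left, inner_smul_right, inner_smul_left, inner_smul_right]
        have e1 : ⟪A (A x), x⟫ = ⟪A x, A x⟫ := (hsym (A x) x).trans rfl
        rw [e1, real_inner_self_eq_norm_mul_norm]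
        simp only [RCLike.conj_to_real, conj_trivial]
        ring
      linarith [expand ▸ this]
    have hd := discrim_le_zero hq
    rw [discrim] at hd
    nlinarith [hd]
  -- conclude ‖A x‖ ≤ ‖N‖ ‖x‖
  refine ContinuousLinearMap.opNorm_le_bound _ (norm_nonneg N) (fun x => ?_)
  have b1 : ⟪A x, x⟫ ≤ ‖N‖ * (‖x‖ * ‖x‖) := h3 x
  have b2 : ⟪A (A x), A x⟫ ≤ ‖N‖ * (‖A x‖ * ‖A x‖) := h3 (A x)
  have hcs := cs x
  by_cases hz : ‖A x‖ = 0
  · rw [hz]; positivity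
  · have hz' : 0 < ‖A x‖ := lt_of_le_of_ne (norm_nonneg _) (Ne.symm hz)
    have key : (‖A x‖ * ‖A x‖) * (‖A x‖ * ‖A x‖)
        ≤ (‖N‖ * (‖A x‖ * ‖A x‖)) * (‖N‖ * (‖x‖ * ‖x‖)) := by
      refine hcs.trans ?_
      have p1 : 0 ≤ ⟪A x, x⟫ := h1 x
      have p2 : 0 ≤ ⟪A (A x), A x⟫ := h1 (A x)
      exact mul_le_mul b2 b1 p1 (by positivity)
    have key2 : ‖A x‖ * ‖A x‖ ≤ (‖N‖ * ‖x‖) * (‖N‖ * ‖x‖) := by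
      nlinarith [hz', norm_nonneg N, norm_nonneg x]
    have key3 : ‖A x‖ ^ 2 ≤ (‖N‖ * ‖x‖) ^ 2 := by rw [sq, sq]; exact key2
    exact le_of_pow_le_pow_left₀ two_ne_zero (by positivity) key3
end

section
/- Let H₁ be a real Hilbert space. Let L : H₁ → H₁ be bounded, let N : H₁ → H₁ be bounded self-adjoint positive semidefinite, let X : H₁ → H₁ be bounded self-adjoint, and let P : H₁ → H₁ be bounded self-adjoint with P + X positive semidefinite. Assume I + N(P + X) is invertible. Then ‖L* X (I + N(P + X))⁻¹ N X L‖ ≤ ‖L‖² ‖X‖² ‖N‖. -/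
open ContinuousLinearMap
open scoped RealInnerProductSpace

/-- Cauchy–Schwarz for the semi-inner product induced by a positive self-adjoint operator. -/
lemma posCS {H₁ : Type*} [NormedAddCommGroup H₁] [InnerProductSpace ℝ H₁] [CompleteSpace H₁]
    (N : H₁ →L[ℝ] H₁) (hN_sa : IsSelfAdjoint N) (hN_pos : ∀ x, 0 ≤ ⟪N x, x⟫) (u v : H₁) :
    ⟪N u, v⟫ ^ 2 ≤ ⟪N u, u⟫ * ⟪N v, v⟫ := by
  have hsym : ∀ a b : H₁, ⟪N a, b⟫ = ⟪N b, a⟫ := fun a b =>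
    (hN_sa.isSymmetric a b).trans (real_inner_comm _ _)
  have hq : ∀ t : ℝ, 0 ≤ ⟪N v, v⟫ * (t * t) + (2 * ⟪N u, v⟫) * t + ⟪N u, u⟫ := by
    intro t
    have h0 := hN_pos (u + t • v)
    have hexp : ⟪N (u + t • v), u + t • v⟫ =
        ⟪N v, v⟫ * (t * t) + (2 * ⟪N u, v⟫) * t + ⟪N u, u⟫ := by
      rw [map_add, map_smul, inner_add_left, inner_add_right, inner_add_right,
        inner_smul_left, inner_smul_left, inner_smul_right, inner_smul_right]
      rw [hsym v u]
      ring_nf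
      simp [RCLike.star_def]
      ring
    linarith [h0, hexp ▸ h0]
  have hd := discrim_le_zero hq
  rw [discrim] at hd
  nlinarith [hd]

/-- A self-adjoint operator with quadratic form bounded by `C‖x‖²` has norm at most `C`. -/
lemma sa_norm_le {H₁ : Type*} [NormedAddCommGroup H₁] [InnerProductSpace ℝ H₁] [CompleteSpace H₁]
    (T : H₁ →L[ℝ] H₁) (hT : IsSelfAdjoint T) {C : ℝ} (hC : 0 ≤ C)
    (hb : ∀ x, |⟪T x, x⟫| ≤ C * ‖x‖ ^ 2) : ‖T‖ ≤ C := by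
  refine T.opNorm_le_bound hC fun x => ?_
  by_cases hTx : T x = 0
  · simp [hTx]
    positivity
  have hx : x ≠ 0 := by rintro rfl; simp at hTx
  have hTxn : (0:ℝ) < ‖T x‖ := norm_pos_iff.mpr hTx
  have hxn : (0:ℝ) < ‖x‖ := norm_pos_iff.mpr hx
  set y : H₁ := (‖x‖ / ‖T x‖) • T x with hy
  have hyn : ‖y‖ = ‖x‖ := by
    rw [hy, norm_smul, Real.norm_eq_abs, abs_of_pos (by positivity)]
    field_simp
  have hsym : ∀ a b : H₁, ⟪T a, b⟫ = ⟪T b, a⟫ := fun a b =>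
    (hT.isSymmetric a b).trans (real_inner_comm _ _)
  have hpol : 4 * ⟪T x, y⟫ = ⟪T (x + y), x + y⟫ - ⟪T (x - y), x - y⟫ := by
    rw [map_add, map_sub, inner_add_left, inner_add_right, inner_add_right,
      inner_sub_left, inner_sub_right, inner_sub_right, hsym y x]
    ring
  have hxy : ⟪T x, y⟫ = ‖x‖ * ‖T x‖ := by
    rw [hy, real_inner_smul_right, real_inner_self_eq_norm_sq]
    field_simp
  have h1 := hb (x + y)
  have h2 := hb (x - y)
  have hpar : ‖x + y‖ ^ 2 + ‖x - y‖ ^ 2 = 2 * (‖x‖ ^ 2 + ‖y‖ ^ 2) := by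
    have := parallelogram_law_with_norm ℝ x y
    nlinarith [this]
  have h3 : C * ‖x + y‖ ^ 2 + C * ‖x - y‖ ^ 2 = 4 * (C * ‖x‖ ^ 2) := by
    have h4 : ‖x + y‖ ^ 2 + ‖x - y‖ ^ 2 = 4 * ‖x‖ ^ 2 := by rw [hpar, hyn]; ring
    calc C * ‖x + y‖ ^ 2 + C * ‖x - y‖ ^ 2 = C * (‖x + y‖ ^ 2 + ‖x - y‖ ^ 2) := by ring
      _ = C * (4 * ‖x‖ ^ 2) := by rw [h4]
      _ = 4 * (C * ‖x‖ ^ 2) := by ring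
  have hbound : 4 * (‖x‖ * ‖T x‖) ≤ 4 * (C * ‖x‖ ^ 2) := by
    have ha := (abs_le.mp h1).2
    have hb2 := (abs_le.mp h2).1
    linarith [hpol, hxy, h3]
  have : ‖x‖ * ‖T x‖ ≤ C * ‖x‖ ^ 2 := by linarith
  calc ‖T x‖ = (‖x‖ * ‖T x‖) / ‖x‖ := by field_simp
    _ ≤ (C * ‖x‖ ^ 2) / ‖x‖ := by gcongr
    _ = C * ‖x‖ := by field_simp

/-- Bound on the quadratic remainder of the perturbed Riccati map:
`‖L* X (I + N(P+X))⁻¹ N X L‖ ≤ ‖L‖² ‖X‖² ‖N‖`. -/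
theorem stmt_8
    {H₁ : Type*} [NormedAddCommGroup H₁] [InnerProductSpace ℝ H₁] [CompleteSpace H₁]
    (L N X P : H₁ →L[ℝ] H₁)
    (hN_sa : IsSelfAdjoint N) (hN_pos : ∀ x, 0 ≤ ⟪N x, x⟫)
    (hX_sa : IsSelfAdjoint X) (hP_sa : IsSelfAdjoint P)
    (hPX_pos : ∀ x, 0 ≤ ⟪(P + X) x, x⟫)
    (h : IsUnit ((1 : H₁ →L[ℝ] H₁) + N ∘L (P + X))) :
    ‖adjoint L ∘L X ∘L Ring.inverse ((1 : H₁ →L[ℝ] H₁) + N ∘L (P + X)) ∘L N ∘L X ∘L L‖ ≤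
      ‖L‖ ^ 2 * ‖X‖ ^ 2 * ‖N‖ := by
  set S : H₁ →L[ℝ] H₁ := P + X with hS
  have hS_sa : IsSelfAdjoint S := hP_sa.add hX_sa
  set A : H₁ →L[ℝ] H₁ := (1 : H₁ →L[ℝ] H₁) + N ∘L S with hA
  set J : H₁ →L[ℝ] H₁ := Ring.inverse A with hJ
  have hJA : J * A = 1 := Ring.inverse_mul_cancel A h
  have hAJ : A * J = 1 := Ring.mul_inverse_cancel A h
  set F : H₁ →L[ℝ] H₁ := J ∘L N with hF
  -- F is self-adjoint
  have hstarA : star A = 1 + S ∘L N := by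
    rw [hA]
    simp only [star_add, star_one]
    congr 1
    rw [← ContinuousLinearMap.mul_def, star_mul, ContinuousLinearMap.mul_def,
      hS_sa.star_eq, hN_sa.star_eq]
  have hstarA_unit : IsUnit (star A) := h.star
  have hcomm : A * N = N * star A := by
    rw [hstarA, hA]
    simp only [ContinuousLinearMap.mul_def]
    ext x
    simp [ContinuousLinearMap.add_comp, ContinuousLinearMap.comp_add, comp_assoc]
  have hF_sa : IsSelfAdjoint F := by
    rw [IsSelfAdjoint, hF, ← ContinuousLinearMap.mul_def, star_mul, hJ,
      ← Ring.inverse_star, hN_sa.star_eq]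
    -- goal : N * Ring.inverse (star A) = Ring.inverse A * N
    have := congrArg (fun T => Ring.inverse A * T * Ring.inverse (star A)) hcomm
    simp only [mul_assoc] at this
    rw [Ring.mul_inverse_cancel _ hstarA_unit, mul_one] at this
    rw [← mul_assoc, Ring.inverse_mul_cancel _ h, one_mul] at this
    rw [← this]
  -- quadratic form bound for F
  have hFx : ∀ x : H₁, F x + N (S (F x)) = N x := by
    intro x
    have : A (J (N x)) = N x := by
      have := congrArg (fun T => T (N x)) hAJ
      simpa [ContinuousLinearMap.mul_def] using this
    have h2 : A (J (N x)) = J (N x) + N (S (J (N x))) := by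
      rw [hA]; simp
    rw [h2] at this
    simpa [hF] using this
  have hSpos : ∀ y : H₁, 0 ≤ ⟪S y, y⟫ := hPX_pos
  have hquad : ∀ x : H₁, 0 ≤ ⟪F x, x⟫ ∧ ⟪F x, x⟫ ≤ ‖N‖ * ‖x‖ ^ 2 := by
    intro x
    set y : H₁ := F x with hyd
    have hkey : y = N (x - S y) := by
      have h5 := hFx x
      rw [map_sub, ← h5]
      abel
    have h1 : 0 ≤ ⟪y, x - S y⟫ := by
      nth_rewrite 1 [hkey]; exact hN_pos _
    have h2 : 0 ≤ ⟪y, S y⟫ := by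
      rw [real_inner_comm]; exact hSpos y
    have ht : ⟪y, x⟫ = ⟪y, x - S y⟫ + ⟪y, S y⟫ := by
      rw [inner_sub_right]; ring
    have htpos : 0 ≤ ⟪y, x⟫ := by rw [ht]; positivity
    have hFyx : ⟪F x, x⟫ = ⟪y, x⟫ := rfl
    constructor
    · rw [hFyx]; exact htpos
    -- upper bound
    have hcs := posCS N hN_sa hN_pos (x - S y) x
    have hNu : ⟪N (x - S y), x⟫ = ⟪y, x⟫ := by rw [← hkey]
    have hNuu : ⟪N (x - S y), x - S y⟫ = ⟪y, x - S y⟫ := by rw [← hkey]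
    rw [hNu, hNuu] at hcs
    have hNxx : ⟪N x, x⟫ ≤ ‖N‖ * ‖x‖ ^ 2 := by
      calc ⟪N x, x⟫ ≤ ‖N x‖ * ‖x‖ := real_inner_le_norm _ _
        _ ≤ (‖N‖ * ‖x‖) * ‖x‖ := by
            apply mul_le_mul_of_nonneg_right (N.le_opNorm x) (norm_nonneg x)
        _ = ‖N‖ * ‖x‖ ^ 2 := by ring
    have huu_le : ⟪y, x - S y⟫ ≤ ⟪y, x⟫ := by linarith [ht ▸ le_refl (⟪y, x⟫)]
    have hNxx0 : 0 ≤ ⟪N x, x⟫ := hN_pos x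
    rw [hFyx]
    nlinarith [hcs, huu_le, htpos, hNxx, hNxx0]
  -- norm of F
  have hFnorm : ‖F‖ ≤ ‖N‖ := by
    refine sa_norm_le F hF_sa (norm_nonneg N) fun x => ?_
    have := hquad x
    rw [abs_of_nonneg this.1]
    exact this.2
  -- assemble
  have hrw : adjoint L ∘L X ∘L Ring.inverse ((1 : H₁ →L[ℝ] H₁) + N ∘L (P + X)) ∘L N ∘L X ∘L L
      = adjoint L ∘L (X ∘L (F ∘L (X ∘L L))) := by
    rw [hF, hJ, hA, hS, comp_assoc]
  rw [hrw]
  have hadj : ‖adjoint L‖ = ‖L‖ := LinearIsometryEquiv.norm_map adjoint L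
  calc ‖adjoint L ∘L (X ∘L (F ∘L (X ∘L L)))‖
      ≤ ‖adjoint L‖ * (‖X‖ * (‖F‖ * (‖X‖ * ‖L‖))) := by
        refine (opNorm_comp_le _ _).trans ?_
        gcongr
        refine (opNorm_comp_le _ _).trans ?_
        gcongr
        refine (opNorm_comp_le _ _).trans ?_
        gcongr
        exact opNorm_comp_le _ _
    _ ≤ ‖L‖ * (‖X‖ * (‖N‖ * (‖X‖ * ‖L‖))) := by
        rw [hadj]
        gcongr
    _ = ‖L‖ ^ 2 * ‖X‖ ^ 2 * ‖N‖ := by ring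
end

section
/- Let H₁ be a real Hilbert space and E = ℝ^{n_u}. Let A, Ã : H₁ → H₁ and B, B̃ : E → H₁ be bounded, let R : E → E be self-adjoint positive definite, let Q : H₁ → H₁ be bounded self-adjoint, and set N := B R⁻¹ B*, Ñ := B̃ R⁻¹ B̃*, ΔN := Ñ − N. Let P_X be a bounded self-adjoint positive semidefinite operator on H₁ such that I + N P_X and I + Ñ P_X are invertible, and define F(P_X, A, B) := P_X − A* P_X (I + N P_X)⁻¹ A − Q and F(P_X, Ã, B̃) := P_X − Ã* P_X (I + Ñ P_X)⁻¹ Ã − Q. If ‖A − Ã‖ ≤ ε and ‖B − B̃‖ ≤ ε, then ‖F(P_X, Ã, B̃) − F(P_X, A, B)‖ ≤ ‖A‖² ‖P_X‖² ‖ΔN‖ + 2 ‖A‖ ‖P_X‖ ε + ‖P_X‖ ε². -/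
set_option maxHeartbeats 1000000

open ContinuousLinearMap
open scoped RealInnerProductSpace

section AuxLemmas

variable {H₁ : Type*} [NormedAddCommGroup H₁] [InnerProductSpace ℝ H₁] [CompleteSpace H₁]

/-- Cauchy–Schwarz inequality for a positive self-adjoint operator. -/
lemma aux_cs (T : H₁ →L[ℝ] H₁) (hsa : IsSelfAdjoint T) (hpos : ∀ x, 0 ≤ ⟪T x, x⟫) (u v : H₁) :
    ⟪T u, v⟫ ^ 2 ≤ ⟪T u, u⟫ * ⟪T v, v⟫ := by
  have hsym : ∀ a b : H₁, ⟪T a, b⟫ = ⟪a, T b⟫ := by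
    intro a b
    conv_lhs => rw [← hsa.adjoint_eq]
    exact ContinuousLinearMap.adjoint_inner_left T b a
  have hq : ∀ t : ℝ, 0 ≤ ⟪T v, v⟫ * (t * t) + (2 * ⟪T u, v⟫) * t + ⟪T u, u⟫ := by
    intro t
    have h := hpos (u + t • v)
    have hexp : ⟪T (u + t • v), u + t • v⟫
        = ⟪T v, v⟫ * (t * t) + (2 * ⟪T u, v⟫) * t + ⟪T u, u⟫ := by
      rw [map_add, map_smul]
      rw [inner_add_left, inner_add_right, inner_add_right]
      rw [inner_smul_left, inner_smul_right, inner_smul_left, inner_smul_right]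
      have : ⟪T v, u⟫ = ⟪T u, v⟫ := by
        rw [hsym v u, real_inner_comm]
      simp only [RCLike.star_def, starRingEnd_apply, star_trivial, this]
      ring
    linarith [hexp ▸ h]
  have hd := discrim_le_zero hq
  rw [discrim] at hd
  nlinarith [hd]

/-- The key bound: `‖P (1 + N P)⁻¹‖ ≤ ‖P‖` for positive semidefinite `N`, `P`. -/
lemma aux_key (N PX : H₁ →L[ℝ] H₁) (hPX_sa : IsSelfAdjoint PX)
    (hPX_pos : ∀ x, 0 ≤ ⟪PX x, x⟫) (hN_pos : ∀ x, 0 ≤ ⟪N x, x⟫)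
    (h : IsUnit ((1 : H₁ →L[ℝ] H₁) + N ∘L PX)) :
    ‖PX ∘L Ring.inverse ((1 : H₁ →L[ℝ] H₁) + N ∘L PX)‖ ≤ ‖PX‖ := by
  set e := (1 : H₁ →L[ℝ] H₁) + N ∘L PX with he
  refine ContinuousLinearMap.opNorm_le_bound _ (norm_nonneg PX) fun x => ?_
  set y := Ring.inverse e x with hy
  have hxy : x = y + N (PX y) := by
    have h1 : e (Ring.inverse e x) = x := by
      have : e ∘L Ring.inverse e = 1 := by
        rw [← ContinuousLinearMap.mul_def, Ring.mul_inverse_cancel _ h]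
      calc e (Ring.inverse e x) = (e ∘L Ring.inverse e) x := rfl
        _ = x := by rw [this]; rfl
    have h2 : e y = y + N (PX y) := by
      simp [he, ContinuousLinearMap.add_apply, ContinuousLinearMap.comp_apply,
        ContinuousLinearMap.one_apply]
    rw [← hy] at h1
    rw [← h1, h2]
  have happ : (PX ∘L Ring.inverse e) x = PX y := rfl
  rw [happ]
  by_cases h0 : PX y = 0
  · rw [h0, norm_zero]
    positivity
  have hP0 : (0:ℝ) < ‖PX y‖ := norm_pos_iff.mpr h0
  have hcs := aux_cs PX hPX_sa hPX_pos y (PX y)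
  have hc1 : ⟪PX y, PX y⟫ = ‖PX y‖ ^ 2 := real_inner_self_eq_norm_sq (PX y)
  have hc2 : ⟪PX (PX y), PX y⟫ ≤ ‖PX‖ * ‖PX y‖ * ‖PX y‖ := by
    calc ⟪PX (PX y), PX y⟫ ≤ ‖PX (PX y)‖ * ‖PX y‖ := real_inner_le_norm _ _
      _ ≤ ‖PX‖ * ‖PX y‖ * ‖PX y‖ := by
          have := PX.le_opNorm (PX y)
          nlinarith [norm_nonneg (PX y)]
  have ha0 : 0 ≤ ⟪PX y, y⟫ := hPX_pos y
  have hb0 : 0 ≤ ⟪N (PX y), PX y⟫ := hN_pos (PX y)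
  have h2 : ⟪PX y, y⟫ ≤ ⟪PX y, x⟫ := by
    have : ⟪PX y, x⟫ = ⟪PX y, y⟫ + ⟪PX y, N (PX y)⟫ := by
      rw [hxy, inner_add_right]
    rw [real_inner_comm] at hb0
    linarith [this, hb0]
  have h3 : ⟪PX y, x⟫ ≤ ‖PX y‖ * ‖x‖ := real_inner_le_norm _ _
  -- combine
  have s1 : ⟪PX y, PX y⟫ ^ 2 ≤ ⟪PX y, y⟫ * (‖PX‖ * ‖PX y‖ * ‖PX y‖) :=
    le_trans hcs (mul_le_mul_of_nonneg_left hc2 ha0)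
  have s2 : ⟪PX y, y⟫ ≤ ‖PX y‖ * ‖x‖ := h2.trans h3
  have s3 : ⟪PX y, y⟫ * (‖PX‖ * ‖PX y‖ * ‖PX y‖)
      ≤ (‖PX y‖ * ‖x‖) * (‖PX‖ * ‖PX y‖ * ‖PX y‖) :=
    mul_le_mul_of_nonneg_right s2 (by positivity)
  have s4 : (‖PX y‖ ^ 2) ^ 2 ≤ (‖PX y‖ * ‖x‖) * (‖PX‖ * ‖PX y‖ * ‖PX y‖) := by
    rw [← hc1]; exact le_trans s1 s3
  have s5 : ‖PX y‖ * (‖PX y‖ * ‖PX y‖ * ‖PX y‖)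
      ≤ (‖PX‖ * ‖x‖) * (‖PX y‖ * ‖PX y‖ * ‖PX y‖) := by nlinarith [s4]
  exact le_of_mul_le_mul_right s5 (by positivity)

end AuxLemmas

/-- A positive-definite operator on a finite-dimensional Euclidean space is a unit. -/
lemma aux_R_unit {n : ℕ} (R : EuclideanSpace ℝ (Fin n) →L[ℝ] EuclideanSpace ℝ (Fin n))
    (hR_pos : ∀ u, u ≠ 0 → 0 < ⟪R u, u⟫) : IsUnit R := by
  have hinj : Function.Injective R := by
    intro u v huv
    by_contra hne
    have hz : u - v ≠ 0 := sub_ne_zero.mpr hne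
    have h0 : R (u - v) = 0 := by rw [map_sub, huv, sub_self]
    have := hR_pos (u - v) hz
    rw [h0, inner_zero_left] at this
    exact lt_irrefl 0 this
  have hinj' : Function.Injective (R : EuclideanSpace ℝ (Fin n) →ₗ[ℝ] EuclideanSpace ℝ (Fin n)) :=
    hinj
  have hsurj := LinearMap.injective_iff_surjective.mp hinj'
  let eL : EuclideanSpace ℝ (Fin n) ≃ₗ[ℝ] EuclideanSpace ℝ (Fin n) :=
    LinearEquiv.ofBijective _ ⟨hinj', hsurj⟩
  let eC : EuclideanSpace ℝ (Fin n) ≃L[ℝ] EuclideanSpace ℝ (Fin n) :=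
    eL.toContinuousLinearEquiv
  exact ⟨eC.toUnit, by ext x; rfl⟩

/-- `B R⁻¹ B*` is positive semidefinite when `R` is positive definite and a unit. -/
lemma aux_N_nonneg {H₁ : Type*} [NormedAddCommGroup H₁] [InnerProductSpace ℝ H₁]
    [CompleteSpace H₁] {n : ℕ}
    (B : EuclideanSpace ℝ (Fin n) →L[ℝ] H₁)
    (R : EuclideanSpace ℝ (Fin n) →L[ℝ] EuclideanSpace ℝ (Fin n))
    (hR_pos : ∀ u, u ≠ 0 → 0 < ⟪R u, u⟫) (hR : IsUnit R) (u : H₁) :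
    0 ≤ ⟪(B ∘L Ring.inverse R ∘L adjoint B) u, u⟫ := by
  set v := adjoint B u with hv
  set w := Ring.inverse R v with hw
  have happ : (B ∘L Ring.inverse R ∘L adjoint B) u = B w := rfl
  rw [happ]
  have h1 : ⟪B w, u⟫ = ⟪w, v⟫ := by
    rw [real_inner_comm, ← ContinuousLinearMap.adjoint_inner_left, ← hv, real_inner_comm]
  rw [h1]
  have hRw : R w = v := by
    have : R ∘L Ring.inverse R = 1 := by
      rw [← ContinuousLinearMap.mul_def, Ring.mul_inverse_cancel _ hR]
    calc R w = (R ∘L Ring.inverse R) v := rfl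
      _ = v := by rw [this]; rfl
  by_cases hw0 : w = 0
  · simp [hw0]
  · have := hR_pos w hw0
    rw [hRw] at this
    rw [real_inner_comm]
    exact le_of_lt this

/-- Perturbation bound for the discrete algebraic Riccati map when the dynamics `(A, B)`
are replaced by `(Ã, B̃)`. -/
theorem stmt_9
    {H₁ : Type*} [NormedAddCommGroup H₁] [InnerProductSpace ℝ H₁] [CompleteSpace H₁]
    {n : ℕ}
    (A A' : H₁ →L[ℝ] H₁)
    (B B' : EuclideanSpace ℝ (Fin n) →L[ℝ] H₁)
    (R : EuclideanSpace ℝ (Fin n) →L[ℝ] EuclideanSpace ℝ (Fin n))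
    (hR_sa : IsSelfAdjoint R) (hR_pos : ∀ u, u ≠ 0 → 0 < ⟪R u, u⟫)
    (Q : H₁ →L[ℝ] H₁) (hQ_sa : IsSelfAdjoint Q)
    (N N' : H₁ →L[ℝ] H₁)
    (hN : N = B ∘L Ring.inverse R ∘L adjoint B)
    (hN' : N' = B' ∘L Ring.inverse R ∘L adjoint B')
    (PX : H₁ →L[ℝ] H₁) (hPX_sa : IsSelfAdjoint PX) (hPX_pos : ∀ x, 0 ≤ ⟪PX x, x⟫)
    (h1 : IsUnit ((1 : H₁ →L[ℝ] H₁) + N ∘L PX))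
    (h2 : IsUnit ((1 : H₁ →L[ℝ] H₁) + N' ∘L PX))
    (ε : ℝ) (hA : ‖A - A'‖ ≤ ε) (hB : ‖B - B'‖ ≤ ε) :
    ‖(PX - adjoint A' ∘L PX ∘L Ring.inverse ((1 : H₁ →L[ℝ] H₁) + N' ∘L PX) ∘L A' - Q)
        - (PX - adjoint A ∘L PX ∘L Ring.inverse ((1 : H₁ →L[ℝ] H₁) + N ∘L PX) ∘L A - Q)‖ ≤
      ‖A‖ ^ 2 * ‖PX‖ ^ 2 * ‖N' - N‖ + 2 * ‖A‖ * ‖PX‖ * ε + ‖PX‖ * ε ^ 2 := by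
  have hRunit : IsUnit R := aux_R_unit R hR_pos
  have hNpos : ∀ x, 0 ≤ ⟪N x, x⟫ := by
    intro x; rw [hN]; exact aux_N_nonneg B R hR_pos hRunit x
  have hN'pos : ∀ x, 0 ≤ ⟪N' x, x⟫ := by
    intro x; rw [hN']; exact aux_N_nonneg B' R hR_pos hRunit x
  have hε0 : 0 ≤ ε := le_trans (norm_nonneg _) hA
  set e : H₁ →L[ℝ] H₁ := (1 : H₁ →L[ℝ] H₁) + N ∘L PX with he
  set e' : H₁ →L[ℝ] H₁ := (1 : H₁ →L[ℝ] H₁) + N' ∘L PX with he'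
  set S : H₁ →L[ℝ] H₁ := PX ∘L Ring.inverse e with hSdef
  set S' : H₁ →L[ℝ] H₁ := PX ∘L Ring.inverse e' with hS'def
  have hS : ‖S‖ ≤ ‖PX‖ := aux_key N PX hPX_sa hPX_pos hNpos h1
  have hS' : ‖S'‖ ≤ ‖PX‖ := aux_key N' PX hPX_sa hPX_pos hN'pos h2
  -- resolvent identity
  have hres : Ring.inverse e' - Ring.inverse e
      = Ring.inverse e' * ((e - e') * Ring.inverse e) := by
    have c1 : Ring.inverse e' * e' = 1 := Ring.inverse_mul_cancel _ h2
    have c2 : e * Ring.inverse e = 1 := Ring.mul_inverse_cancel _ h1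
    calc Ring.inverse e' - Ring.inverse e
        = Ring.inverse e' * (e * Ring.inverse e) - (Ring.inverse e' * e') * Ring.inverse e := by
          rw [c1, c2, mul_one, one_mul]
      _ = Ring.inverse e' * ((e - e') * Ring.inverse e) := by noncomm_ring
  have hee' : e - e' = (N - N') * PX := by
    rw [he, he', ← ContinuousLinearMap.mul_def, ← ContinuousLinearMap.mul_def]
    noncomm_ring
  have hSdiff : S' - S = S' * ((N - N') * S) := by
    rw [hSdef, hS'def, ← ContinuousLinearMap.mul_def, ← ContinuousLinearMap.mul_def]
    rw [← mul_sub, hres, hee']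
    noncomm_ring
  have hSd : ‖S' - S‖ ≤ ‖PX‖ ^ 2 * ‖N' - N‖ := by
    calc ‖S' - S‖ = ‖S' * ((N - N') * S)‖ := by rw [hSdiff]
      _ ≤ ‖S'‖ * ‖(N - N') * S‖ := norm_mul_le _ _
      _ ≤ ‖S'‖ * (‖N - N'‖ * ‖S‖) :=
          mul_le_mul_of_nonneg_left (norm_mul_le _ _) (norm_nonneg _)
      _ ≤ ‖PX‖ * (‖N - N'‖ * ‖PX‖) := by
          refine mul_le_mul hS' (mul_le_mul_of_nonneg_left hS (norm_nonneg _)) (by positivity)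
            (norm_nonneg _)
      _ = ‖PX‖ ^ 2 * ‖N' - N‖ := by rw [norm_sub_rev]; ring
  have hΔ : ‖A' - A‖ ≤ ε := by rw [norm_sub_rev]; exact hA
  have hΔadj : ‖adjoint (A' - A)‖ ≤ ε := by
    rw [ContinuousLinearMap.adjoint.norm_map]; exact hΔ
  have hAadj : ‖adjoint A‖ = ‖A‖ := ContinuousLinearMap.adjoint.norm_map A
  -- decomposition
  have hEq : (PX - adjoint A' ∘L PX ∘L Ring.inverse e' ∘L A' - Q)
        - (PX - adjoint A ∘L PX ∘L Ring.inverse e ∘L A - Q)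
      = adjoint A * ((S - S') * A) - adjoint (A' - A) * (S' * (A' - A))
        - adjoint (A' - A) * (S' * A) - adjoint A * (S' * (A' - A)) := by
    rw [map_sub]
    simp only [← ContinuousLinearMap.mul_def, hSdef, hS'def]
    noncomm_ring
  rw [hEq]
  have htri : ‖adjoint A * ((S - S') * A) - adjoint (A' - A) * (S' * (A' - A))
        - adjoint (A' - A) * (S' * A) - adjoint A * (S' * (A' - A))‖
      ≤ ‖adjoint A * ((S - S') * A)‖ + ‖adjoint (A' - A) * (S' * (A' - A))‖
        + ‖adjoint (A' - A) * (S' * A)‖ + ‖adjoint A * (S' * (A' - A))‖ := by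
    calc ‖adjoint A * ((S - S') * A) - adjoint (A' - A) * (S' * (A' - A))
          - adjoint (A' - A) * (S' * A) - adjoint A * (S' * (A' - A))‖
        ≤ ‖adjoint A * ((S - S') * A) - adjoint (A' - A) * (S' * (A' - A))
          - adjoint (A' - A) * (S' * A)‖ + ‖adjoint A * (S' * (A' - A))‖ := norm_sub_le _ _
      _ ≤ ‖adjoint A * ((S - S') * A) - adjoint (A' - A) * (S' * (A' - A))‖
          + ‖adjoint (A' - A) * (S' * A)‖ + ‖adjoint A * (S' * (A' - A))‖ := by
          gcongr; exact norm_sub_le _ _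
      _ ≤ ‖adjoint A * ((S - S') * A)‖ + ‖adjoint (A' - A) * (S' * (A' - A))‖
          + ‖adjoint (A' - A) * (S' * A)‖ + ‖adjoint A * (S' * (A' - A))‖ := by
          gcongr; exact norm_sub_le _ _
  have n1 : ‖adjoint A * ((S - S') * A)‖ ≤ ‖A‖ * ((‖PX‖ ^ 2 * ‖N' - N‖) * ‖A‖) := by
    calc ‖adjoint A * ((S - S') * A)‖ ≤ ‖adjoint A‖ * ‖(S - S') * A‖ := norm_mul_le _ _
      _ ≤ ‖adjoint A‖ * (‖S - S'‖ * ‖A‖) :=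
          mul_le_mul_of_nonneg_left (norm_mul_le _ _) (norm_nonneg _)
      _ = ‖A‖ * (‖S - S'‖ * ‖A‖) := by rw [hAadj]
      _ ≤ ‖A‖ * ((‖PX‖ ^ 2 * ‖N' - N‖) * ‖A‖) := by
          have hss : ‖S - S'‖ ≤ ‖PX‖ ^ 2 * ‖N' - N‖ := by rw [norm_sub_rev]; exact hSd
          exact mul_le_mul_of_nonneg_left
            (mul_le_mul_of_nonneg_right hss (norm_nonneg _)) (norm_nonneg _)
  have n2 : ‖adjoint (A' - A) * (S' * (A' - A))‖ ≤ ε * (‖PX‖ * ε) := by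
    calc ‖adjoint (A' - A) * (S' * (A' - A))‖
        ≤ ‖adjoint (A' - A)‖ * ‖S' * (A' - A)‖ := norm_mul_le _ _
      _ ≤ ‖adjoint (A' - A)‖ * (‖S'‖ * ‖A' - A‖) :=
          mul_le_mul_of_nonneg_left (norm_mul_le _ _) (norm_nonneg _)
      _ ≤ ε * (‖PX‖ * ε) := by
          refine mul_le_mul hΔadj (mul_le_mul hS' hΔ (norm_nonneg _) (norm_nonneg _))
            (by positivity) hε0
  have n3 : ‖adjoint (A' - A) * (S' * A)‖ ≤ ε * (‖PX‖ * ‖A‖) := by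
    calc ‖adjoint (A' - A) * (S' * A)‖ ≤ ‖adjoint (A' - A)‖ * ‖S' * A‖ := norm_mul_le _ _
      _ ≤ ‖adjoint (A' - A)‖ * (‖S'‖ * ‖A‖) :=
          mul_le_mul_of_nonneg_left (norm_mul_le _ _) (norm_nonneg _)
      _ ≤ ε * (‖PX‖ * ‖A‖) := by
          refine mul_le_mul hΔadj (mul_le_mul_of_nonneg_right hS' (norm_nonneg _))
            (by positivity) hε0
  have n4 : ‖adjoint A * (S' * (A' - A))‖ ≤ ‖A‖ * (‖PX‖ * ε) := by
    calc ‖adjoint A * (S' * (A' - A))‖ ≤ ‖adjoint A‖ * ‖S' * (A' - A)‖ := norm_mul_le _ _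
      _ ≤ ‖adjoint A‖ * (‖S'‖ * ‖A' - A‖) :=
          mul_le_mul_of_nonneg_left (norm_mul_le _ _) (norm_nonneg _)
      _ = ‖A‖ * (‖S'‖ * ‖A' - A‖) := by rw [hAadj]
      _ ≤ ‖A‖ * (‖PX‖ * ε) := mul_le_mul_of_nonneg_left
          (mul_le_mul hS' hΔ (norm_nonneg _) (norm_nonneg _)) (norm_nonneg _)
  nlinarith [htri, n1, n2, n3, n4]
end

section
/- Let H₁ be a real Hilbert space and E = ℝ^{n_u}. Let A, Ã : H₁ → H₁ and B, B̃ : E → H₁ be bounded, R : E → E self-adjoint positive definite, Q : H₁ → H₁ bounded self-adjoint positive semidefinite, N := B R⁻¹ B*. Let P be a bounded self-adjoint positive semidefinite solution of the Riccati equation P = A* P (I + N P)⁻¹ A + Q, let K := −(R + B* P B)⁻¹ B* P A, L := A + B K, and suppose ρ(L) ≤ ρ < 1 with τ(L, ρ) := sup_{k≥0} ‖L^k‖ ρ^{-k} finite. Define T X := X − L* X L, R̂ X := L* X (I + N(P+X))⁻¹ N X L, F(M, A, B) := M − A* M (I + N M)⁻¹ A − Q (and F(M, Ã, B̃) analogously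 with Ñ := B̃ R⁻¹ B̃*), and Φ X := T⁻¹[F(P+X, A, B) − F(P+X, Ã, B̃) − R̂ X]. If X is bounded self-adjoint with ‖X‖ ≤ ν ≤ 1/2 and P + X positive semidefinite, ‖A − Ã‖ ≤ ε, ‖B − B̃‖ ≤ ε, and ε ≤ ‖B‖, then ‖Φ X‖ ≤ (τ(L, ρ)²/(1 − ρ²)) [ ‖L‖² ‖N‖ ν² + 3 ε (‖P‖+1)² (‖A‖+1)² (‖R⁻¹‖+1) (‖B‖+1) ]. -/
set_option maxHeartbeats 1000000
open ContinuousLinearMap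
open scoped RealInnerProductSpace

section Aux
variable {H : Type*} [NormedAddCommGroup H] [InnerProductSpace ℝ H] [CompleteSpace H]

lemma psd_norm_sq_le (M : H →L[ℝ] H) (hsa : IsSelfAdjoint M) (hpos : ∀ x, 0 ≤ ⟪M x, x⟫)
    (z : H) : ‖M z‖ ^ 2 ≤ ‖M‖ * ⟪M z, z⟫ := by
  have hsa' := ContinuousLinearMap.isSelfAdjoint_iff'.mp hsa
  have hswap : ∀ u v : H, ⟪M u, v⟫ = ⟪u, M v⟫ := fun u v => by
    rw [← hsa', adjoint_inner_left, hsa']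
  have key : ∀ t : ℝ, 0 ≤ ⟪M (M z), M z⟫ * (t * t) + (2 * ‖M z‖ ^ 2) * t + ⟪M z, z⟫ := by
    intro t
    have h0 := hpos (z + t • M z)
    have e1 : ⟪M (z + t • M z), z + t • M z⟫ =
        ⟪M (M z), M z⟫ * (t * t) + (2 * ‖M z‖ ^ 2) * t + ⟪M z, z⟫ := by
      rw [map_add, map_smul, inner_add_left, inner_add_right, inner_add_right,
        real_inner_smul_left, real_inner_smul_right, real_inner_smul_left,
        real_inner_smul_right]
      have hMMz : ⟪M (M z), z⟫ = ‖M z‖ ^ 2 := by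
        rw [hswap, real_inner_self_eq_norm_sq]
      have hc : ⟪M z, M z⟫ = ‖M z‖ ^ 2 := real_inner_self_eq_norm_sq _
      rw [hMMz, hc]; ring
    linarith [h0, e1.ge]
  have hd := discrim_le_zero key
  rw [discrim] at hd
  have h1 : ⟪M (M z), M z⟫ ≤ ‖M‖ * ‖M z‖ ^ 2 := by
    calc ⟪M (M z), M z⟫ ≤ ‖M (M z)‖ * ‖M z‖ := real_inner_le_norm _ _
    _ ≤ (‖M‖ * ‖M z‖) * ‖M z‖ := by
        have := M.le_opNorm (M z); nlinarith [norm_nonneg (M z)]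
    _ = ‖M‖ * ‖M z‖ ^ 2 := by ring
  have h2 : 0 ≤ ⟪M z, z⟫ := hpos z
  rcases eq_or_ne (‖M z‖) 0 with h | h
  · rw [h]; simpa using mul_nonneg (norm_nonneg M) h2
  · have hp : 0 < ‖M z‖ ^ 2 := by positivity
    nlinarith [mul_le_mul_of_nonneg_right h1 h2]

-- key lemma: ‖M * (1 + N*M)⁻¹‖ ≤ ‖M‖ for M sa psd, N psd
lemma key_norm_le (M N : H →L[ℝ] H) (hMsa : IsSelfAdjoint M) (hMpos : ∀ x, 0 ≤ ⟪M x, x⟫)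
    (hNpos : ∀ x, 0 ≤ ⟪N x, x⟫) (hu : IsUnit (1 + N * M)) :
    ‖M * Ring.inverse (1 + N * M)‖ ≤ ‖M‖ := by
  apply ContinuousLinearMap.opNorm_le_bound _ (norm_nonneg M)
  intro x
  set J := Ring.inverse (1 + N * M) with hJ
  set z := J x with hz
  have hxz : x = z + N (M z) := by
    have h1 : (1 + N * M) * J = 1 := Ring.mul_inverse_cancel _ hu
    have := congrArg (fun f : H →L[ℝ] H => f x) h1
    simpa [ContinuousLinearMap.mul_apply, ContinuousLinearMap.add_apply] using this.symm
  have happ : (M * J) x = M z := rfl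
  rw [happ]
  have hMzx : ⟪M z, x⟫ ≥ ⟪M z, z⟫ := by
    rw [hxz, inner_add_right]
    have : 0 ≤ ⟪M z, N (M z)⟫ := by rw [real_inner_comm]; exact hNpos (M z)
    linarith
  have h1 : ‖M z‖ ^ 2 ≤ ‖M‖ * ⟪M z, z⟫ := psd_norm_sq_le M hMsa hMpos z
  have h2 : ⟪M z, x⟫ ≤ ‖M z‖ * ‖x‖ := real_inner_le_norm _ _
  rcases eq_or_ne (‖M z‖) 0 with h | h
  · rw [h]; exact mul_nonneg (norm_nonneg M) (norm_nonneg x)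
  · have hp : 0 < ‖M z‖ := lt_of_le_of_ne (norm_nonneg _) (Ne.symm h)
    nlinarith [mul_le_mul_of_nonneg_left h2 (norm_nonneg M),
      mul_le_mul_of_nonneg_left hMzx (norm_nonneg M), hp, mul_pos hp hp]

-- swap: J * N = N * J₂  (general ring)
lemma inv_swap {R : Type*} [Ring R] (M N : R) (hu1 : IsUnit (1 + N * M)) (hu2 : IsUnit (1 + M * N)) :
    Ring.inverse (1 + N * M) * N = N * Ring.inverse (1 + M * N) := by
  set J := Ring.inverse (1 + N * M)
  set J2 := Ring.inverse (1 + M * N)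
  have h1 : J * (1 + N * M) = 1 := Ring.inverse_mul_cancel _ hu1
  have h2 : (1 + M * N) * J2 = 1 := Ring.mul_inverse_cancel _ hu2
  have hc : N * (1 + M * N) = (1 + N * M) * N := by noncomm_ring
  calc J * N = J * ((N * (1 + M * N)) * J2) := by rw [mul_assoc N, h2, mul_one]
  _ = J * (((1 + N * M) * N) * J2) := by rw [hc]
  _ = (J * (1 + N * M)) * (N * J2) := by noncomm_ring
  _ = N * J2 := by rw [h1, one_mul]

-- resolvent difference: M*J' = M*J + M*J'*(N-N')*(M*J)
lemma resolvent_diff {R : Type*} [Ring R] (M N N' : R)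
    (hu1 : IsUnit (1 + N * M)) (hu2 : IsUnit (1 + N' * M)) :
    M * Ring.inverse (1 + N' * M) = M * Ring.inverse (1 + N * M) +
      M * Ring.inverse (1 + N' * M) * (N - N') * (M * Ring.inverse (1 + N * M)) := by
  set J := Ring.inverse (1 + N * M)
  set J' := Ring.inverse (1 + N' * M)
  have h1 : (1 + N * M) * J = 1 := Ring.mul_inverse_cancel _ hu1
  have h2 : J' * (1 + N' * M) = 1 := Ring.inverse_mul_cancel _ hu2
  calc M * J' = M * J' * ((1 + N * M) * J) := by rw [h1, mul_one]
  _ = M * J' * ((1 + N' * M) * J) + M * J' * ((N - N') * (M * J)) := by noncomm_ring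
  _ = M * (J' * (1 + N' * M)) * J + M * J' * ((N - N') * (M * J)) := by noncomm_ring
  _ = M * J + M * J' * (N - N') * (M * J) := by rw [h2, mul_one]; noncomm_ring

lemma Tinv_norm_le (L : H →L[ℝ] H) (ρ τ : ℝ) (hρ0 : 0 < ρ) (hρ1 : ρ < 1) (hτ0 : 0 ≤ τ)
    (hLk : ∀ k : ℕ, ‖L ^ k‖ ≤ τ * ρ ^ k)
    (T : (H →L[ℝ] H) →L[ℝ] (H →L[ℝ] H))
    (hT : ∀ Y, T Y = Y - adjoint L ∘L Y ∘L L) (hT_unit : IsUnit T)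
    (D : H →L[ℝ] H) :
    ‖Ring.inverse T D‖ ≤ τ ^ 2 / (1 - ρ ^ 2) * ‖D‖ := by
  set g : ℕ → H →L[ℝ] H := fun k => star (L ^ k) * D * L ^ k with hg
  have hgb : ∀ k, ‖g k‖ ≤ τ ^ 2 * (ρ ^ 2) ^ k * ‖D‖ := by
    intro k
    have h1 : ‖g k‖ ≤ ‖star (L ^ k)‖ * ‖D‖ * ‖L ^ k‖ :=
      le_trans (norm_mul_le _ _) (by
        exact mul_le_mul_of_nonneg_right (norm_mul_le _ _) (norm_nonneg _))
    rw [ContinuousLinearMap.star_eq_adjoint, (ContinuousLinearMap.adjoint (E := H) (F := H) (𝕜 := ℝ)).norm_map (L ^ k)] at h1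
    have h2 := hLk k
    have hLkn : (0:ℝ) ≤ ‖L ^ k‖ := norm_nonneg _
    calc ‖g k‖ ≤ ‖L ^ k‖ * ‖D‖ * ‖L ^ k‖ := h1
    _ ≤ (τ * ρ ^ k) * ‖D‖ * (τ * ρ ^ k) := by
        have hρk : (0:ℝ) ≤ τ * ρ ^ k := by positivity
        nlinarith [norm_nonneg D, mul_le_mul_of_nonneg_right h2 (norm_nonneg D)]
    _ = τ ^ 2 * (ρ ^ 2) ^ k * ‖D‖ := by rw [← pow_mul, pow_mul']; ring
  have hsumgeo : Summable (fun k : ℕ => τ ^ 2 * (ρ ^ 2) ^ k * ‖D‖) := by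
    apply Summable.mul_right
    apply Summable.mul_left
    exact summable_geometric_of_lt_one (by positivity) (by nlinarith)
  have hnorm : Summable (fun k => ‖g k‖) :=
    Summable.of_nonneg_of_le (fun k => norm_nonneg _) hgb hsumgeo
  have hsum : Summable g := hnorm.of_norm
  set S := ∑' k, g k with hS
  have hshift : star L * S * L = ∑' k, g (k + 1) := by
    have hmap1 : star L * S = ∑' k, star L * g k := (hsum.tsum_mul_left (star L)).symm
    have hmap2 : (∑' k, star L * g k) * L = ∑' k, star L * g k * L :=
      ((hsum.mul_left (star L)).tsum_mul_right L).symm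
    rw [hmap1, hmap2]
    congr 1
    funext k
    simp only [hg, pow_succ, star_mul]
    noncomm_ring
  have hTS : T S = D := by
    rw [hT]
    have hadj : adjoint L ∘L S ∘L L = star L * S * L := by
      rw [← ContinuousLinearMap.star_eq_adjoint]; rfl
    rw [hadj, hshift]
    have h0 : ∑' k, g k = g 0 + ∑' k, g (k + 1) := Summable.tsum_eq_zero_add hsum
    have hg0 : g 0 = D := by simp [hg]
    rw [hS, h0, hg0]
    abel
  have hinv : Ring.inverse T D = S := by
    conv_lhs => rw [← hTS]
    have h1 : Ring.inverse T * T = 1 := Ring.inverse_mul_cancel _ hT_unit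
    have := congrArg (fun f : (H →L[ℝ] H) →L[ℝ] (H →L[ℝ] H) => f S) h1
    simpa [ContinuousLinearMap.mul_apply] using this
  rw [hinv]
  calc ‖S‖ ≤ ∑' k, ‖g k‖ := norm_tsum_le_tsum_norm hnorm
  _ ≤ ∑' k, τ ^ 2 * (ρ ^ 2) ^ k * ‖D‖ := Summable.tsum_le_tsum hgb hnorm hsumgeo
  _ = τ ^ 2 * ‖D‖ * (1 - ρ ^ 2)⁻¹ := by
      rw [tsum_mul_right, tsum_mul_left, tsum_geometric_of_lt_one (by positivity) (by nlinarith)]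
      ring
  _ = τ ^ 2 / (1 - ρ ^ 2) * ‖D‖ := by ring

end Aux

/-- The discrete algebraic Riccati map `M ↦ M - A* M (I + N M)⁻¹ A - Q`. -/
noncomputable def riccatiMap {H₁ : Type*} [NormedAddCommGroup H₁] [InnerProductSpace ℝ H₁]
    [CompleteSpace H₁] (A N Q M : H₁ →L[ℝ] H₁) : H₁ →L[ℝ] H₁ :=
  M - ContinuousLinearMap.adjoint A ∘L M ∘L
    Ring.inverse ((1 : H₁ →L[ℝ] H₁) + N ∘L M) ∘L A - Q

/-- The quadratic remainder `R̂ X = L* X (I + N(P+X))⁻¹ N X L`. -/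
noncomputable def quadRem {H₁ : Type*} [NormedAddCommGroup H₁] [InnerProductSpace ℝ H₁]
    [CompleteSpace H₁] (L N P X : H₁ →L[ℝ] H₁) : H₁ →L[ℝ] H₁ :=
  ContinuousLinearMap.adjoint L ∘L X ∘L
    Ring.inverse ((1 : H₁ →L[ℝ] H₁) + N ∘L (P + X)) ∘L N ∘L X ∘L L

/-- The fixed-point map `Φ X = T⁻¹[F(P+X, A, B) - F(P+X, Ã, B̃) - R̂ X]`. -/
noncomputable def PhiMap {H₁ : Type*} [NormedAddCommGroup H₁] [InnerProductSpace ℝ H₁]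
    [CompleteSpace H₁] (T : (H₁ →L[ℝ] H₁) →L[ℝ] (H₁ →L[ℝ] H₁))
    (A A' N N' Q P L X : H₁ →L[ℝ] H₁) : H₁ →L[ℝ] H₁ :=
  Ring.inverse T
    (riccatiMap A N Q (P + X) - riccatiMap A' N' Q (P + X) - quadRem L N P X)


lemma scalar_ineq (p a r b ε ν : ℝ) (hp0 : 0 ≤ p) (ha0 : 0 ≤ a) (hr0 : 0 ≤ r) (hb0 : 0 ≤ b)
    (hε0 : 0 ≤ ε) (hν0 : 0 ≤ ν) (hν : ν ≤ 1 / 2) (hεB : ε ≤ b) :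
    a * ((p + ν) * (3 * ε * r * b) * (p + ν)) * a + ε * (p + ν) * a + a * (p + ν) * ε
      + ε * (p + ν) * ε ≤ 3 * ε * (p + 1) ^ 2 * (a + 1) ^ 2 * (r + 1) * (b + 1) := by
  have hm0 : (0:ℝ) ≤ p + ν := by linarith
  set q : ℝ := (p + 1) * (a + 1) with hqdef
  have hq1 : (1:ℝ) ≤ q := by nlinarith
  have h1 : (p + ν) * a ≤ q := by nlinarith
  have h2 : ((p + ν) * a) ^ 2 ≤ q ^ 2 := by nlinarith [mul_nonneg hm0 ha0]
  have hq2 : q ≤ q ^ 2 := by nlinarith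
  have hc1 : a * ((p + ν) * (3 * ε * r * b) * (p + ν)) * a ≤ 3 * ε * r * b * q ^ 2 := by
    have he : a * ((p + ν) * (3 * ε * r * b) * (p + ν)) * a
        = 3 * ε * r * b * (((p + ν) * a) ^ 2) := by ring
    rw [he]
    exact mul_le_mul_of_nonneg_left h2 (by positivity)
  have hc2 : ε * (p + ν) * a ≤ ε * q := by
    rw [mul_assoc]; exact mul_le_mul_of_nonneg_left h1 hε0
  have hc3 : a * (p + ν) * ε ≤ ε * q := by
    have he : a * (p + ν) * ε = ε * ((p + ν) * a) := by ring
    rw [he]; exact mul_le_mul_of_nonneg_left h1 hε0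
  have hc4 : ε * (p + ν) * ε ≤ ε * q * b := by
    have hεq : ε * (p + ν) ≤ ε * q := mul_le_mul_of_nonneg_left (by nlinarith) hε0
    have hεq0 : (0:ℝ) ≤ ε * q := mul_nonneg hε0 (le_trans zero_le_one hq1)
    calc ε * (p + ν) * ε ≤ ε * q * ε := mul_le_mul_of_nonneg_right hεq hε0
    _ ≤ ε * q * b := mul_le_mul_of_nonneg_left hεB hεq0
  have hrhs : 3 * ε * (p + 1) ^ 2 * (a + 1) ^ 2 * (r + 1) * (b + 1)
      = 3 * ε * q ^ 2 * (r + 1) * (b + 1) := by rw [hqdef]; ring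
  rw [hrhs]
  have hint1 : (0:ℝ) ≤ ε * b * (q ^ 2 - q) := mul_nonneg (mul_nonneg hε0 hb0) (by linarith)
  have hint2 : (0:ℝ) ≤ ε * (q ^ 2 - q) := mul_nonneg hε0 (by linarith)
  have hint3 : (0:ℝ) ≤ ε * r * q ^ 2 := mul_nonneg (mul_nonneg hε0 hr0) (sq_nonneg q)
  have hint4 : (0:ℝ) ≤ ε * b * q ^ 2 := mul_nonneg (mul_nonneg hε0 hb0) (sq_nonneg q)
  have hint5 : (0:ℝ) ≤ ε * q ^ 2 := mul_nonneg hε0 (sq_nonneg q)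
  nlinarith [hc1, hc2, hc3, hc4, hint1, hint2, hint3, hint4, hint5]

/-- Bound on `‖Φ X‖` for admissible perturbations `X` with `‖X‖ ≤ ν ≤ 1/2`. -/
theorem stmt_10
    {H₁ : Type*} [NormedAddCommGroup H₁] [InnerProductSpace ℝ H₁] [CompleteSpace H₁]
    {n : ℕ}
    (A A' : H₁ →L[ℝ] H₁)
    (B B' : EuclideanSpace ℝ (Fin n) →L[ℝ] H₁)
    (R : EuclideanSpace ℝ (Fin n) →L[ℝ] EuclideanSpace ℝ (Fin n))
    (hR_sa : IsSelfAdjoint R) (hR_pos : ∀ u, u ≠ 0 → 0 < ⟪R u, u⟫)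
    (Q : H₁ →L[ℝ] H₁) (hQ_sa : IsSelfAdjoint Q) (hQ_pos : ∀ x, 0 ≤ ⟪Q x, x⟫)
    (N N' : H₁ →L[ℝ] H₁)
    (hN : N = B ∘L Ring.inverse R ∘L adjoint B)
    (hN' : N' = B' ∘L Ring.inverse R ∘L adjoint B')
    (P : H₁ →L[ℝ] H₁) (hP_sa : IsSelfAdjoint P) (hP_pos : ∀ x, 0 ≤ ⟪P x, x⟫)
    (hP_unit : IsUnit ((1 : H₁ →L[ℝ] H₁) + N ∘L P))
    (hP_ric : P = adjoint A ∘L P ∘L Ring.inverse ((1 : H₁ →L[ℝ] H₁) + N ∘L P) ∘L A + Q)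
    (K : H₁ →L[ℝ] EuclideanSpace ℝ (Fin n))
    (hK : K = -(Ring.inverse (R + adjoint B ∘L P ∘L B) ∘L adjoint B ∘L P ∘L A))
    (L : H₁ →L[ℝ] H₁) (hL : L = A + B ∘L K)
    (ρ : ℝ) (hρ0 : 0 < ρ) (hρ1 : ρ < 1)
    (hspec : spectralRadius ℝ L ≤ ENNReal.ofReal ρ)
    (hbdd : BddAbove (Set.range fun k : ℕ => ‖L ^ k‖ / ρ ^ k))
    (τ : ℝ) (hτ : τ = ⨆ k : ℕ, ‖L ^ k‖ / ρ ^ k)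
    (T : (H₁ →L[ℝ] H₁) →L[ℝ] (H₁ →L[ℝ] H₁))
    (hT : ∀ Y, T Y = Y - adjoint L ∘L Y ∘L L) (hT_unit : IsUnit T)
    (X : H₁ →L[ℝ] H₁) (hX_sa : IsSelfAdjoint X)
    (ν : ℝ) (hXν : ‖X‖ ≤ ν) (hν : ν ≤ 1 / 2)
    (hPX_pos : ∀ x, 0 ≤ ⟪(P + X) x, x⟫)
    (hu1 : IsUnit ((1 : H₁ →L[ℝ] H₁) + N ∘L (P + X)))
    (hu2 : IsUnit ((1 : H₁ →L[ℝ] H₁) + N' ∘L (P + X)))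
    (ε : ℝ) (hA : ‖A - A'‖ ≤ ε) (hB : ‖B - B'‖ ≤ ε) (hεB : ε ≤ ‖B‖) :
    ‖PhiMap T A A' N N' Q P L X‖ ≤
      (τ ^ 2 / (1 - ρ ^ 2)) *
        (‖L‖ ^ 2 * ‖N‖ * ν ^ 2 +
          3 * ε * (‖P‖ + 1) ^ 2 * (‖A‖ + 1) ^ 2 * (‖Ring.inverse R‖ + 1) * (‖B‖ + 1)) := by
  have hε0 : 0 ≤ ε := le_trans (norm_nonneg _) hA
  have hν0 : 0 ≤ ν := le_trans (norm_nonneg _) hXν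
  have hstar : ∀ Z : H₁ →L[ℝ] H₁, ‖star Z‖ = ‖Z‖ := fun Z => by
    rw [ContinuousLinearMap.star_eq_adjoint]
    exact (ContinuousLinearMap.adjoint (E := H₁) (F := H₁) (𝕜 := ℝ)).norm_map Z
  have hterm : ∀ u v w : H₁ →L[ℝ] H₁, ‖u * v * w‖ ≤ ‖u‖ * ‖v‖ * ‖w‖ := fun u v w =>
    le_trans (norm_mul_le _ _) (mul_le_mul_of_nonneg_right (norm_mul_le _ _) (norm_nonneg _))
  -- R is a unit
  have hR_unit : IsUnit R := by
    have hRinj : Function.Injective R := by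
      intro u v huv
      by_contra h
      have hne : u - v ≠ 0 := sub_ne_zero.mpr fun hh => h hh
      have h0 := hR_pos (u - v) hne
      rw [map_sub, huv, sub_self] at h0
      simp [inner_zero_left] at h0
    have hRsurj : Function.Surjective R :=
      (LinearMap.injective_iff_surjective
        (f := (R : EuclideanSpace ℝ (Fin n) →ₗ[ℝ] EuclideanSpace ℝ (Fin n)))).mp hRinj
    let e : EuclideanSpace ℝ (Fin n) ≃ₗ[ℝ] EuclideanSpace ℝ (Fin n) :=
      LinearEquiv.ofBijective (R : _ →ₗ[ℝ] _) ⟨hRinj, hRsurj⟩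
    let ec := e.toContinuousLinearEquiv
    refine isUnit_iff_exists.mpr ⟨ec.symm.toContinuousLinearMap, ?_, ?_⟩
    · refine ContinuousLinearMap.ext fun x => ?_
      show R (ec.symm x) = x
      exact e.apply_symm_apply x
    · refine ContinuousLinearMap.ext fun x => ?_
      show ec.symm (R x) = x
      exact e.symm_apply_apply x
  -- R⁻¹ is positive
  have hRinv_pos : ∀ v, 0 ≤ ⟪Ring.inverse R v, v⟫ := by
    intro v
    have hv : R (Ring.inverse R v) = v := by
      have h1 := Ring.mul_inverse_cancel R hR_unit
      have h2 := congrArg (fun f : EuclideanSpace ℝ (Fin n) →L[ℝ] EuclideanSpace ℝ (Fin n) => f v) h1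
      simpa [ContinuousLinearMap.mul_apply] using h2
    rcases eq_or_ne (Ring.inverse R v) 0 with h | h
    · simp [h]
    · have h0 := (hR_pos _ h).le
      calc (0:ℝ) ≤ ⟪R (Ring.inverse R v), Ring.inverse R v⟫ := h0
      _ = ⟪Ring.inverse R v, v⟫ := by rw [real_inner_comm, hv]
  have hRinv_sa : adjoint (Ring.inverse R) = Ring.inverse R := by
    rw [← ContinuousLinearMap.star_eq_adjoint, ← Ring.inverse_star, hR_sa.star_eq]
  -- positivity and self-adjointness of N, N'
  have hNpos : ∀ x, 0 ≤ ⟪N x, x⟫ := by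
    intro x
    rw [hN]
    have he : (B ∘L Ring.inverse R ∘L adjoint B) x = B (Ring.inverse R (adjoint B x)) := rfl
    rw [he]
    calc (0:ℝ) ≤ ⟪Ring.inverse R (adjoint B x), adjoint B x⟫ := hRinv_pos _
    _ = ⟪B (Ring.inverse R (adjoint B x)), x⟫ := by
        exact ContinuousLinearMap.adjoint_inner_right B _ x
  have hN'pos : ∀ x, 0 ≤ ⟪N' x, x⟫ := by
    intro x
    rw [hN']
    have he : (B' ∘L Ring.inverse R ∘L adjoint B') x = B' (Ring.inverse R (adjoint B' x)) := rfl
    rw [he]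
    calc (0:ℝ) ≤ ⟪Ring.inverse R (adjoint B' x), adjoint B' x⟫ := hRinv_pos _
    _ = ⟪B' (Ring.inverse R (adjoint B' x)), x⟫ := by
        exact ContinuousLinearMap.adjoint_inner_right B' _ x
  have hNsa : IsSelfAdjoint N := by
    rw [ContinuousLinearMap.isSelfAdjoint_iff', hN]
    simp only [ContinuousLinearMap.adjoint_comp, ContinuousLinearMap.adjoint_adjoint, hRinv_sa]
    rw [ContinuousLinearMap.comp_assoc]
  -- τ facts
  have hτ0 : 0 ≤ τ := by
    rw [hτ]
    refine le_trans ?_ (le_ciSup hbdd 0)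
    positivity
  have hLk : ∀ k : ℕ, ‖L ^ k‖ ≤ τ * ρ ^ k := by
    intro k
    have h := le_ciSup hbdd k
    rw [← hτ] at h
    exact (div_le_iff₀ (pow_pos hρ0 k)).mp h
  -- set up M and the inverses
  set M : H₁ →L[ℝ] H₁ := P + X with hM
  have hMsa : IsSelfAdjoint M := hP_sa.add hX_sa
  have hMn : ‖M‖ ≤ ‖P‖ + ν := le_trans (norm_add_le _ _) (by linarith)
  have hu1m : IsUnit ((1 : H₁ →L[ℝ] H₁) + N * M) := by
    rw [ContinuousLinearMap.mul_def]; exact hu1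
  have hu2m : IsUnit ((1 : H₁ →L[ℝ] H₁) + N' * M) := by
    rw [ContinuousLinearMap.mul_def]; exact hu2
  have humn : IsUnit ((1 : H₁ →L[ℝ] H₁) + M * N) := by
    have h := hu1m.star
    rwa [star_add, star_one, star_mul, hMsa.star_eq, hNsa.star_eq] at h
  set J : H₁ →L[ℝ] H₁ := Ring.inverse (1 + N * M) with hJdef
  set J' : H₁ →L[ℝ] H₁ := Ring.inverse (1 + N' * M) with hJ'def
  have hWb : ‖M * J‖ ≤ ‖P‖ + ν := by
    rw [hJdef]
    exact (key_norm_le M N hMsa hPX_pos hNpos hu1m).trans hMn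
  have hW'b : ‖M * J'‖ ≤ ‖P‖ + ν := by
    rw [hJ'def]
    exact (key_norm_le M N' hMsa hPX_pos hN'pos hu2m).trans hMn
  -- quadRem bound
  have hq_eq : quadRem L N P X = (star L * X) * (J * N) * (X * L) := by
    unfold quadRem
    simp only [← ContinuousLinearMap.mul_def, ← ContinuousLinearMap.star_eq_adjoint, ← hM,
      ← hJdef]
    noncomm_ring
  have hJN : ‖J * N‖ ≤ ‖N‖ := by
    rw [hJdef, inv_swap M N hu1m humn]
    exact key_norm_le N M hNsa hNpos hPX_pos humn
  have hqb : ‖quadRem L N P X‖ ≤ ‖L‖ ^ 2 * ‖N‖ * ν ^ 2 := by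
    rw [hq_eq]
    have h1 : ‖star L * X‖ ≤ ‖L‖ * ν :=
      le_trans (norm_mul_le _ _) (by rw [hstar]; exact mul_le_mul_of_nonneg_left hXν (norm_nonneg L))
    have h2 : ‖X * L‖ ≤ ν * ‖L‖ :=
      le_trans (norm_mul_le _ _) (mul_le_mul_of_nonneg_right hXν (norm_nonneg L))
    calc ‖(star L * X) * (J * N) * (X * L)‖ ≤ ‖star L * X‖ * ‖J * N‖ * ‖X * L‖ := hterm _ _ _
    _ ≤ (‖L‖ * ν) * ‖N‖ * (ν * ‖L‖) := by
        have hLν : (0:ℝ) ≤ ‖L‖ * ν := by positivity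
        exact mul_le_mul (mul_le_mul h1 hJN (norm_nonneg _) hLν) h2 (norm_nonneg _)
          (by positivity)
    _ = ‖L‖ ^ 2 * ‖N‖ * ν ^ 2 := by ring
  -- ‖N - N'‖ bound
  have hB'n : ‖B'‖ ≤ ‖B‖ + ε := by
    calc ‖B'‖ = ‖B - (B - B')‖ := by congr 1; abel
    _ ≤ ‖B‖ + ‖B - B'‖ := norm_sub_le _ _
    _ ≤ ‖B‖ + ε := by linarith
  have hadjBB' : ‖adjoint B - adjoint B'‖ ≤ ε := by
    have he : adjoint B - adjoint B' = adjoint (B - B') := by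
      simp [map_sub]
    rw [he, (ContinuousLinearMap.adjoint (𝕜 := ℝ)).norm_map]
    exact hB
  have hNN' : ‖N - N'‖ ≤ 3 * ε * ‖Ring.inverse R‖ * ‖B‖ := by
    have hsplit : N - N' = (B - B') ∘L (Ring.inverse R ∘L adjoint B)
        + B' ∘L (Ring.inverse R ∘L (adjoint B - adjoint B')) := by
      rw [hN, hN']
      simp only [ContinuousLinearMap.sub_comp, ContinuousLinearMap.comp_sub]
      abel
    have h1 : ‖(B - B') ∘L (Ring.inverse R ∘L adjoint B)‖ ≤ ε * (‖Ring.inverse R‖ * ‖B‖) := by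
      refine le_trans (ContinuousLinearMap.opNorm_comp_le _ _) ?_
      have hinner : ‖Ring.inverse R ∘L adjoint B‖ ≤ ‖Ring.inverse R‖ * ‖B‖ := by
        refine le_trans (ContinuousLinearMap.opNorm_comp_le _ _) ?_
        rw [(ContinuousLinearMap.adjoint (𝕜 := ℝ)).norm_map]
      exact mul_le_mul hB hinner (norm_nonneg _) hε0
    have h2 : ‖B' ∘L (Ring.inverse R ∘L (adjoint B - adjoint B'))‖ ≤
        (‖B‖ + ε) * (‖Ring.inverse R‖ * ε) := by
      refine le_trans (ContinuousLinearMap.opNorm_comp_le _ _) ?_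
      have hinner : ‖Ring.inverse R ∘L (adjoint B - adjoint B')‖ ≤ ‖Ring.inverse R‖ * ε := by
        refine le_trans (ContinuousLinearMap.opNorm_comp_le _ _) ?_
        exact mul_le_mul_of_nonneg_left hadjBB' (norm_nonneg _)
      exact mul_le_mul hB'n hinner (norm_nonneg _) (by positivity)
    calc ‖N - N'‖ = ‖(B - B') ∘L (Ring.inverse R ∘L adjoint B)
        + B' ∘L (Ring.inverse R ∘L (adjoint B - adjoint B'))‖ := by rw [← hsplit]
    _ ≤ ε * (‖Ring.inverse R‖ * ‖B‖) + (‖B‖ + ε) * (‖Ring.inverse R‖ * ε) :=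
        le_trans (norm_add_le _ _) (add_le_add h1 h2)
    _ ≤ 3 * ε * ‖Ring.inverse R‖ * ‖B‖ := by
        nlinarith [norm_nonneg (Ring.inverse R), norm_nonneg B, hε0, hεB,
          mul_nonneg hε0 (norm_nonneg (Ring.inverse R))]
  -- Riccati difference algebraic identity
  have hres : M * J' = M * J + M * J' * (N - N') * (M * J) := by
    rw [hJdef, hJ'def]
    exact resolvent_diff M N N' hu1m hu2m
  have e2 : M * J' - M * J = M * J' * (N - N') * (M * J) := sub_eq_of_eq_add' hres
  have hdiff_eq : riccatiMap A N Q M - riccatiMap A' N' Q M =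
      star A * (M * J' * (N - N') * (M * J)) * A
        - star (A - A') * (M * J') * A - star A * (M * J') * (A - A')
        + star (A - A') * (M * J') * (A - A') := by
    have e1 : riccatiMap A N Q M - riccatiMap A' N' Q M
        = star A' * (M * J') * A' - star A * (M * J) * A := by
      unfold riccatiMap
      simp only [← ContinuousLinearMap.mul_def, ← ContinuousLinearMap.star_eq_adjoint,
        ← hJdef, ← hJ'def]
      noncomm_ring
    rw [e1, ← e2]
    simp only [star_sub]
    noncomm_ring
  -- norm bound on the Riccati difference
  have hdnorm : ‖riccatiMap A N Q M - riccatiMap A' N' Q M‖ ≤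
      ‖A‖ * ((‖P‖ + ν) * (3 * ε * ‖Ring.inverse R‖ * ‖B‖) * (‖P‖ + ν)) * ‖A‖
      + ε * (‖P‖ + ν) * ‖A‖ + ‖A‖ * (‖P‖ + ν) * ε + ε * (‖P‖ + ν) * ε := by
    rw [hdiff_eq]
    have hpν : (0:ℝ) ≤ ‖P‖ + ν := by positivity
    have t1 : ‖star A * (M * J' * (N - N') * (M * J)) * A‖ ≤
        ‖A‖ * ((‖P‖ + ν) * (3 * ε * ‖Ring.inverse R‖ * ‖B‖) * (‖P‖ + ν)) * ‖A‖ := by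
      refine le_trans (hterm _ _ _) ?_
      rw [hstar]
      have hin : ‖M * J' * (N - N') * (M * J)‖ ≤
          (‖P‖ + ν) * (3 * ε * ‖Ring.inverse R‖ * ‖B‖) * (‖P‖ + ν) := by
        refine le_trans (hterm _ _ _) ?_
        exact mul_le_mul (mul_le_mul hW'b hNN' (norm_nonneg _) hpν) hWb (norm_nonneg _)
          (by positivity)
      exact mul_le_mul (mul_le_mul_of_nonneg_left hin (norm_nonneg A)) le_rfl (norm_nonneg A)
        (by positivity)
    have t2 : ‖star (A - A') * (M * J') * A‖ ≤ ε * (‖P‖ + ν) * ‖A‖ := by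
      refine le_trans (hterm _ _ _) ?_
      rw [hstar]
      exact mul_le_mul (mul_le_mul hA hW'b (norm_nonneg _) hε0) le_rfl (norm_nonneg A)
        (by positivity)
    have t3 : ‖star A * (M * J') * (A - A')‖ ≤ ‖A‖ * (‖P‖ + ν) * ε := by
      refine le_trans (hterm _ _ _) ?_
      rw [hstar]
      exact mul_le_mul (mul_le_mul_of_nonneg_left hW'b (norm_nonneg A)) hA (norm_nonneg _)
        (by positivity)
    have t4 : ‖star (A - A') * (M * J') * (A - A')‖ ≤ ε * (‖P‖ + ν) * ε := by
      refine le_trans (hterm _ _ _) ?_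
      rw [hstar]
      exact mul_le_mul (mul_le_mul hA hW'b (norm_nonneg _) hε0) hA (norm_nonneg _)
        (by positivity)
    calc ‖star A * (M * J' * (N - N') * (M * J)) * A - star (A - A') * (M * J') * A
          - star A * (M * J') * (A - A') + star (A - A') * (M * J') * (A - A')‖
        ≤ ‖star A * (M * J' * (N - N') * (M * J)) * A - star (A - A') * (M * J') * A
          - star A * (M * J') * (A - A')‖ + ‖star (A - A') * (M * J') * (A - A')‖ :=
          norm_add_le _ _
    _ ≤ ‖star A * (M * J' * (N - N') * (M * J)) * A - star (A - A') * (M * J') * A‖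
          + ‖star A * (M * J') * (A - A')‖ + ‖star (A - A') * (M * J') * (A - A')‖ := by
          have := norm_sub_le (star A * (M * J' * (N - N') * (M * J)) * A
            - star (A - A') * (M * J') * A) (star A * (M * J') * (A - A'))
          linarith
    _ ≤ ‖star A * (M * J' * (N - N') * (M * J)) * A‖ + ‖star (A - A') * (M * J') * A‖
          + ‖star A * (M * J') * (A - A')‖ + ‖star (A - A') * (M * J') * (A - A')‖ := by
          have := norm_sub_le (star A * (M * J' * (N - N') * (M * J)) * A)
            (star (A - A') * (M * J') * A)
          linarith
    _ ≤ _ := by linarith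
  -- scalar inequality
  have hscalar : ‖A‖ * ((‖P‖ + ν) * (3 * ε * ‖Ring.inverse R‖ * ‖B‖) * (‖P‖ + ν)) * ‖A‖
      + ε * (‖P‖ + ν) * ‖A‖ + ‖A‖ * (‖P‖ + ν) * ε + ε * (‖P‖ + ν) * ε ≤
      3 * ε * (‖P‖ + 1) ^ 2 * (‖A‖ + 1) ^ 2 * (‖Ring.inverse R‖ + 1) * (‖B‖ + 1) :=
    scalar_ineq ‖P‖ ‖A‖ ‖Ring.inverse R‖ ‖B‖ ε ν (norm_nonneg P) (norm_nonneg A)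
      (norm_nonneg _) (norm_nonneg B) hε0 hν0 hν hεB
  -- assemble
  have hnum : ‖riccatiMap A N Q M - riccatiMap A' N' Q M - quadRem L N P X‖ ≤
      ‖L‖ ^ 2 * ‖N‖ * ν ^ 2 +
        3 * ε * (‖P‖ + 1) ^ 2 * (‖A‖ + 1) ^ 2 * (‖Ring.inverse R‖ + 1) * (‖B‖ + 1) := by
    refine le_trans (norm_sub_le _ _) ?_
    linarith [hdnorm, hqb, hscalar]
  have hphi : PhiMap T A A' N N' Q P L X =
      Ring.inverse T (riccatiMap A N Q M - riccatiMap A' N' Q M - quadRem L N P X) := by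
    unfold PhiMap
    rw [← hM]
  rw [hphi]
  calc ‖Ring.inverse T (riccatiMap A N Q M - riccatiMap A' N' Q M - quadRem L N P X)‖
      ≤ τ ^ 2 / (1 - ρ ^ 2) * ‖riccatiMap A N Q M - riccatiMap A' N' Q M - quadRem L N P X‖ :=
        Tinv_norm_le L ρ τ hρ0 hρ1 hτ0 hLk T hT hT_unit _
  _ ≤ _ := by
      refine mul_le_mul_of_nonneg_left hnum ?_
      have h : (0:ℝ) < 1 - ρ ^ 2 := by nlinarith
      positivity
end

section
/- Let H₁ be a real Hilbert space and E = ℝ^{n_u}. For i = 1, 2, let A_i : H₁ → H₁ and B_i : E → H₁ be bounded linear operators and P_i : H₁ → H₁ bounded self-adjoint positive semidefinite, and let R : E → E be self-adjoint with ⟨u, R u⟩ ≥ μ ‖u‖² for all u ∈ E, for some μ > 0. Define K_i := −(R + B_i* P_i B_i)⁻¹ B_i* P_i A_i and Γ := 1 + max{‖A₁‖, ‖B₁‖, ‖P₁‖, ‖K₁‖}. If ‖A₁ − A₂‖ ≤ ε, ‖B₁ − B₂‖ ≤ ε, ‖P₁ − P₂‖ ≤ ε and ε ∈ [0, 1), then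 ‖K₁ − K₂‖ ≤ 3 ε Γ³ / μ. -/
open ContinuousLinearMap
open scoped RealInnerProductSpace

section Aux

variable {n : ℕ}

local notation "E" => EuclideanSpace ℝ (Fin n)

lemma aux_lower (S : E →L[ℝ] E) (μ : ℝ)
    (hco : ∀ u, μ * ‖u‖ ^ 2 ≤ ⟪u, S u⟫) : ∀ u, μ * ‖u‖ ≤ ‖S u‖ := by
  intro u
  rcases eq_or_ne u 0 with rfl | hu
  · simp
  · have h1 := hco u
    have h2 : ⟪u, S u⟫ ≤ ‖u‖ * ‖S u‖ := real_inner_le_norm u (S u)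
    have hn : 0 < ‖u‖ := norm_pos_iff.mpr hu
    nlinarith

lemma aux_isUnit (S : E →L[ℝ] E) (μ : ℝ) (hμ : 0 < μ)
    (hlow : ∀ u, μ * ‖u‖ ≤ ‖S u‖) : IsUnit S := by
  rw [ContinuousLinearMap.isUnit_iff_bijective]
  have hinj : Function.Injective S := by
    intro x y hxy
    have h := hlow (x - y)
    rw [map_sub, hxy, sub_self, norm_zero] at h
    have h0 : ‖x - y‖ = 0 :=
      le_antisymm (by nlinarith [norm_nonneg (x - y)]) (norm_nonneg _)
    exact sub_eq_zero.mp (norm_eq_zero.mp h0)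
  exact ⟨hinj, (LinearMap.injective_iff_surjective (f := (S : E →ₗ[ℝ] E))).mp hinj⟩

end Aux


set_option maxHeartbeats 1000000 in
lemma aux_identity {H₁ : Type*} [NormedAddCommGroup H₁] [InnerProductSpace ℝ H₁]
    [CompleteSpace H₁] {n : ℕ}
    (A₁ A₂ : H₁ →L[ℝ] H₁)
    (B₁ B₂ : EuclideanSpace ℝ (Fin n) →L[ℝ] H₁)
    (P₁ P₂ : H₁ →L[ℝ] H₁)
    (R : EuclideanSpace ℝ (Fin n) →L[ℝ] EuclideanSpace ℝ (Fin n))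
    (K₁ : H₁ →L[ℝ] EuclideanSpace ℝ (Fin n)) :
      (R + adjoint B₂ ∘L P₂ ∘L B₂) ∘L K₁ + adjoint B₂ ∘L P₂ ∘L A₂
        = ((adjoint B₂ - adjoint B₁) ∘L (P₂ ∘L (B₂ ∘L K₁ + A₂))
           + adjoint B₁ ∘L ((P₂ - P₁) ∘L (B₂ ∘L K₁ + A₂))
           + adjoint B₁ ∘L (P₁ ∘L ((B₂ - B₁) ∘L K₁ + (A₂ - A₁))))
          + (((R + adjoint B₁ ∘L P₁ ∘L B₁) ∘L K₁) + adjoint B₁ ∘L P₁ ∘L A₁) := by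
  refine ContinuousLinearMap.ext fun z => ?_
  simp only [add_apply, comp_apply, sub_apply, map_sub, map_add]
  abel

set_option maxHeartbeats 2000000 in
/-- Perturbation bound for the Riccati gains: `‖K₁ - K₂‖ ≤ 3 ε Γ³ / μ`. -/
theorem stmt_16
    {H₁ : Type*} [NormedAddCommGroup H₁] [InnerProductSpace ℝ H₁] [CompleteSpace H₁]
    {n : ℕ}
    (A₁ A₂ : H₁ →L[ℝ] H₁)
    (B₁ B₂ : EuclideanSpace ℝ (Fin n) →L[ℝ] H₁)
    (P₁ P₂ : H₁ →L[ℝ] H₁)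
    (hP₁_sa : IsSelfAdjoint P₁) (hP₁_pos : ∀ x, 0 ≤ ⟪P₁ x, x⟫)
    (hP₂_sa : IsSelfAdjoint P₂) (hP₂_pos : ∀ x, 0 ≤ ⟪P₂ x, x⟫)
    (R : EuclideanSpace ℝ (Fin n) →L[ℝ] EuclideanSpace ℝ (Fin n))
    (hR_sa : IsSelfAdjoint R)
    (μ : ℝ) (hμ : 0 < μ) (hR : ∀ u, μ * ‖u‖ ^ 2 ≤ ⟪u, R u⟫)
    (K₁ K₂ : H₁ →L[ℝ] EuclideanSpace ℝ (Fin n))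
    (hK₁ : K₁ = -(Ring.inverse (R + adjoint B₁ ∘L P₁ ∘L B₁) ∘L adjoint B₁ ∘L P₁ ∘L A₁))
    (hK₂ : K₂ = -(Ring.inverse (R + adjoint B₂ ∘L P₂ ∘L B₂) ∘L adjoint B₂ ∘L P₂ ∘L A₂))
    (Γ : ℝ) (hΓ : Γ = 1 + max (max ‖A₁‖ ‖B₁‖) (max ‖P₁‖ ‖K₁‖))
    (ε : ℝ) (hε0 : 0 ≤ ε) (hε1 : ε < 1)
    (hA : ‖A₁ - A₂‖ ≤ ε) (hB : ‖B₁ - B₂‖ ≤ ε) (hP : ‖P₁ - P₂‖ ≤ ε) :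
    ‖K₁ - K₂‖ ≤ 3 * ε * Γ ^ 3 / μ := by
  set S₁ := R + adjoint B₁ ∘L P₁ ∘L B₁ with hS₁
  set S₂ := R + adjoint B₂ ∘L P₂ ∘L B₂ with hS₂
  -- coercivity
  have hco : ∀ (P : H₁ →L[ℝ] H₁) (B : EuclideanSpace ℝ (Fin n) →L[ℝ] H₁)
      (hPp : ∀ x, 0 ≤ ⟪P x, x⟫) (u : EuclideanSpace ℝ (Fin n)),
      μ * ‖u‖ ^ 2 ≤ ⟪u, (R + adjoint B ∘L P ∘L B) u⟫ := by
    intro P B hPp u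
    have h1 : ⟪u, (R + adjoint B ∘L P ∘L B) u⟫ = ⟪u, R u⟫ + ⟪B u, P (B u)⟫ := by
      simp [inner_add_right, adjoint_inner_right]
    have h2 : (0:ℝ) ≤ ⟪B u, P (B u)⟫ := by rw [real_inner_comm]; exact hPp _
    have := hR u
    linarith [h1.ge, h1.le]
  have hlow₁ : ∀ u, μ * ‖u‖ ≤ ‖S₁ u‖ := aux_lower S₁ μ (hco P₁ B₁ hP₁_pos)
  have hlow₂ : ∀ u, μ * ‖u‖ ≤ ‖S₂ u‖ := aux_lower S₂ μ (hco P₂ B₂ hP₂_pos)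
  have hu₁ : IsUnit S₁ := aux_isUnit S₁ μ hμ hlow₁
  have hu₂ : IsUnit S₂ := aux_isUnit S₂ μ hμ hlow₂
  have hone₁ : S₁ * Ring.inverse S₁ = 1 := Ring.mul_inverse_cancel _ hu₁
  have hone₂ : S₂ * Ring.inverse S₂ = 1 := Ring.mul_inverse_cancel _ hu₂
  have hSK₁ : S₁ ∘L K₁ = -(adjoint B₁ ∘L P₁ ∘L A₁) := by
    rw [hK₁, comp_neg, ← comp_assoc, ← mul_def, hone₁, one_def, id_comp]
  have hSK₂ : S₂ ∘L K₂ = -(adjoint B₂ ∘L P₂ ∘L A₂) := by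
    rw [hK₂, comp_neg, ← comp_assoc, ← mul_def, hone₂, one_def, id_comp]
  set M := B₂ ∘L K₁ + A₂ with hM
  set N := (B₂ - B₁) ∘L K₁ + (A₂ - A₁) with hN
  set D := (adjoint B₂ - adjoint B₁) ∘L (P₂ ∘L M) + adjoint B₁ ∘L ((P₂ - P₁) ∘L M)
      + adjoint B₁ ∘L (P₁ ∘L N) with hD
  have key : S₂ ∘L (K₁ - K₂) = D := by
    have e1 : S₂ ∘L (K₁ - K₂) = S₂ ∘L K₁ + adjoint B₂ ∘L P₂ ∘L A₂ := by
      rw [comp_sub, hSK₂, sub_neg_eq_add]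
    have e2 : S₂ ∘L K₁ + adjoint B₂ ∘L P₂ ∘L A₂
        = D + ((S₁ ∘L K₁) + adjoint B₁ ∘L P₁ ∘L A₁) := by
      rw [hD, hM, hN, hS₁, hS₂]
      exact aux_identity A₁ A₂ B₁ B₂ P₁ P₂ R K₁
    rw [e1, e2, hSK₁]
    simp
  -- norm bounds
  have hΓ1 : 1 ≤ Γ := by
    have h : (0:ℝ) ≤ max (max ‖A₁‖ ‖B₁‖) (max ‖P₁‖ ‖K₁‖) :=
      le_trans (norm_nonneg A₁) (le_max_of_le_left (le_max_left _ _))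
    linarith only [h, hΓ]
  have hΓ0 : (0:ℝ) ≤ Γ := le_trans zero_le_one hΓ1
  have hA₁Γ : ‖A₁‖ ≤ Γ - 1 := by
    have h := le_max_of_le_left (le_max_left ‖A₁‖ ‖B₁‖) (c := max ‖P₁‖ ‖K₁‖)
    linarith only [h, hΓ]
  have hB₁Γ : ‖B₁‖ ≤ Γ - 1 := by
    have h := le_max_of_le_left (le_max_right ‖A₁‖ ‖B₁‖) (c := max ‖P₁‖ ‖K₁‖)
    linarith only [h, hΓ]
  have hP₁Γ : ‖P₁‖ ≤ Γ - 1 := by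
    have h := le_max_of_le_right (le_max_left ‖P₁‖ ‖K₁‖) (b := max ‖A₁‖ ‖B₁‖)
    linarith only [h, hΓ]
  have hK₁Γ : ‖K₁‖ ≤ Γ - 1 := by
    have h := le_max_of_le_right (le_max_right ‖P₁‖ ‖K₁‖) (b := max ‖A₁‖ ‖B₁‖)
    linarith only [h, hΓ]
  have hA₂Γ : ‖A₂‖ ≤ Γ := by
    have h := norm_sub_norm_le A₂ A₁
    rw [norm_sub_rev] at h
    linarith only [h, hA, hA₁Γ, hε1]
  have hB₂Γ : ‖B₂‖ ≤ Γ := by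
    have h := norm_sub_norm_le B₂ B₁
    rw [norm_sub_rev] at h
    linarith only [h, hB, hB₁Γ, hε1]
  have hP₂Γ : ‖P₂‖ ≤ Γ := by
    have h := norm_sub_norm_le P₂ P₁
    rw [norm_sub_rev] at h
    linarith only [h, hP, hP₁Γ, hε1]
  have hMn : ‖M‖ ≤ Γ ^ 2 := by
    have h1 : ‖M‖ ≤ ‖B₂ ∘L K₁‖ + ‖A₂‖ := by rw [hM]; exact norm_add_le _ _
    have h2 : ‖B₂ ∘L K₁‖ ≤ ‖B₂‖ * ‖K₁‖ := opNorm_comp_le _ _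
    nlinarith only [h1, h2, hB₂Γ, hK₁Γ, hA₂Γ, hΓ1, norm_nonneg K₁, norm_nonneg B₂]
  have hNn : ‖N‖ ≤ ε * Γ := by
    have h1 : ‖N‖ ≤ ‖(B₂ - B₁) ∘L K₁‖ + ‖A₂ - A₁‖ := by rw [hN]; exact norm_add_le _ _
    have h2 : ‖(B₂ - B₁) ∘L K₁‖ ≤ ‖B₂ - B₁‖ * ‖K₁‖ := opNorm_comp_le _ _
    have h3 : ‖B₂ - B₁‖ ≤ ε := by rw [norm_sub_rev]; exact hB
    have h4 : ‖A₂ - A₁‖ ≤ ε := by rw [norm_sub_rev]; exact hA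
    nlinarith only [h1, h2, h3, h4, hK₁Γ, hΓ1, hε0, norm_nonneg K₁,
      norm_nonneg (B₂ - B₁)]
  have hadj : ‖adjoint B₂ - adjoint B₁‖ ≤ ε := by
    have h1 : adjoint B₂ - adjoint B₁ = adjoint (B₂ - B₁) := (map_sub adjoint B₂ B₁).symm
    rw [h1, adjoint.norm_map, norm_sub_rev]; exact hB
  have hadj₁ : ‖adjoint B₁‖ ≤ Γ - 1 := by rw [adjoint.norm_map]; exact hB₁Γ
  have ht1 : ‖(adjoint B₂ - adjoint B₁) ∘L (P₂ ∘L M)‖ ≤ ε * Γ ^ 3 := by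
    have h1 : ‖(adjoint B₂ - adjoint B₁) ∘L (P₂ ∘L M)‖
        ≤ ‖adjoint B₂ - adjoint B₁‖ * ‖P₂ ∘L M‖ := opNorm_comp_le _ _
    have h2 : ‖P₂ ∘L M‖ ≤ ‖P₂‖ * ‖M‖ := opNorm_comp_le _ _
    nlinarith only [h1, h2, hadj, hP₂Γ, hMn, hΓ1, hε0, hΓ0,
      norm_nonneg (adjoint B₂ - adjoint B₁), norm_nonneg P₂, norm_nonneg M,
      norm_nonneg (P₂ ∘L M), mul_le_mul hP₂Γ hMn (norm_nonneg M) hΓ0]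
  have ht2 : ‖adjoint B₁ ∘L ((P₂ - P₁) ∘L M)‖ ≤ ε * Γ ^ 3 := by
    have h1 : ‖adjoint B₁ ∘L ((P₂ - P₁) ∘L M)‖
        ≤ ‖adjoint B₁‖ * ‖(P₂ - P₁) ∘L M‖ := opNorm_comp_le _ _
    have h2 : ‖(P₂ - P₁) ∘L M‖ ≤ ‖P₂ - P₁‖ * ‖M‖ := opNorm_comp_le _ _
    have h3 : ‖P₂ - P₁‖ ≤ ε := by rw [norm_sub_rev]; exact hP
    nlinarith only [h1, h2, h3, hadj₁, hMn, hΓ1, hε0, hΓ0,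
      norm_nonneg (adjoint B₁), norm_nonneg (P₂ - P₁), norm_nonneg M,
      norm_nonneg ((P₂ - P₁) ∘L M), mul_le_mul h3 hMn (norm_nonneg M) hε0]
  have ht3 : ‖adjoint B₁ ∘L (P₁ ∘L N)‖ ≤ ε * Γ ^ 3 := by
    have h1 : ‖adjoint B₁ ∘L (P₁ ∘L N)‖ ≤ ‖adjoint B₁‖ * ‖P₁ ∘L N‖ := opNorm_comp_le _ _
    have h2 : ‖P₁ ∘L N‖ ≤ ‖P₁‖ * ‖N‖ := opNorm_comp_le _ _
    nlinarith only [h1, h2, hadj₁, hP₁Γ, hNn, hΓ1, hε0, hΓ0,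
      norm_nonneg (adjoint B₁), norm_nonneg P₁, norm_nonneg N,
      norm_nonneg (P₁ ∘L N), mul_le_mul hP₁Γ hNn (norm_nonneg N) (by linarith only [hΓ1] : (0:ℝ) ≤ Γ - 1)]
  have hDn : ‖D‖ ≤ 3 * ε * Γ ^ 3 := by
    have h1 : ‖D‖ ≤ ‖(adjoint B₂ - adjoint B₁) ∘L (P₂ ∘L M) + adjoint B₁ ∘L ((P₂ - P₁) ∘L M)‖
        + ‖adjoint B₁ ∘L (P₁ ∘L N)‖ := by rw [hD]; exact norm_add_le _ _
    have h2 : ‖(adjoint B₂ - adjoint B₁) ∘L (P₂ ∘L M) + adjoint B₁ ∘L ((P₂ - P₁) ∘L M)‖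
        ≤ ‖(adjoint B₂ - adjoint B₁) ∘L (P₂ ∘L M)‖ + ‖adjoint B₁ ∘L ((P₂ - P₁) ∘L M)‖ :=
      norm_add_le _ _
    linarith only [h1, h2, ht1, ht2, ht3]
  -- conclude
  have hC : (0:ℝ) ≤ 3 * ε * Γ ^ 3 / μ := by
    apply div_nonneg _ hμ.le
    have := pow_nonneg hΓ0 3
    nlinarith only [this, hε0]
  refine opNorm_le_bound _ hC fun z => ?_
  have h1 : μ * ‖(K₁ - K₂) z‖ ≤ ‖S₂ ((K₁ - K₂) z)‖ := hlow₂ _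
  have h2 : S₂ ((K₁ - K₂) z) = D z := by rw [← comp_apply, key]
  have h3 : ‖D z‖ ≤ ‖D‖ * ‖z‖ := le_opNorm _ _
  have h4 : ‖D‖ * ‖z‖ ≤ 3 * ε * Γ ^ 3 * ‖z‖ :=
    mul_le_mul_of_nonneg_right hDn (norm_nonneg z)
  rw [h2] at h1
  rw [div_mul_eq_mul_div, le_div_iff₀ hμ]
  nlinarith only [h1, h3, h4, hμ]
end

section
/- Let H₁ be a real Hilbert space and E = ℝ^{n_u}. Let A : H₁ → H₁, B : E → H₁, and K, K̃ : H₁ → E be bounded linear operators. Let L := A + B K, let ρ ∈ (0, 1) satisfy ρ(L) ≤ ρ where ρ(L) is the spectral radius, and suppose τ(L, ρ) := sup_{k≥0} ‖L^k‖ ρ^{-k} is finite. If ‖K̃ − K‖ ≤ (1 − ρ)/(2 τ(L, ρ) ‖B‖), then for every k ≥ 0: ‖(A + B K̃)^k‖ ≤ τ(L, ρ) ((1 + ρ)/2)^k; equivalently, τ(A + B K̃, (1 + ρ)/2) ≤ τ(L, ρ). -/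
open ContinuousLinearMap

lemma aux_pow_add_identity {R : Type*} [Ring R] (x y : R) :
    ∀ k : ℕ, (x + y) ^ k =
      x ^ k + ∑ j ∈ Finset.range k, x ^ (k - 1 - j) * (y * (x + y) ^ j) := by
  intro k
  induction k with
  | zero => simp
  | succ k ih =>
      have h1 : (x + y) ^ (k + 1) = x * (x + y) ^ k + y * (x + y) ^ k := by
        rw [pow_succ', add_mul]
      rw [h1, ih, mul_add, Finset.mul_sum, Finset.sum_range_succ]
      have h2 : ∀ j ∈ Finset.range k,
          x * (x ^ (k - 1 - j) * (y * (x + y) ^ j))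
            = x ^ (k + 1 - 1 - j) * (y * (x + y) ^ j) := by
        intro j hj
        have hj' : j < k := Finset.mem_range.mp hj
        rw [← mul_assoc, ← pow_succ']
        congr 2
        omega
      rw [Finset.sum_congr rfl h2]
      have h3 : x ^ (k + 1 - 1 - k) = 1 := by
        have : k + 1 - 1 - k = 0 := by omega
        rw [this, pow_zero]
      rw [h3, one_mul, ← pow_succ', ← ih]
      abel

/-- A gain `K̃` close enough to the stabilizing gain `K` still stabilizes the closed loop:
`‖(A + B K̃)^k‖ ≤ τ(L, ρ) ((1 + ρ)/2)^k` for all `k`. -/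
theorem stmt_17
    {H₁ : Type*} [NormedAddCommGroup H₁] [InnerProductSpace ℝ H₁] [CompleteSpace H₁]
    {n : ℕ}
    (A : H₁ →L[ℝ] H₁) (B : EuclideanSpace ℝ (Fin n) →L[ℝ] H₁)
    (K K' : H₁ →L[ℝ] EuclideanSpace ℝ (Fin n))
    (L : H₁ →L[ℝ] H₁) (hL : L = A + B ∘L K)
    (ρ : ℝ) (hρ : ρ ∈ Set.Ioo (0 : ℝ) 1)
    (hspec : spectralRadius ℝ L ≤ ENNReal.ofReal ρ)
    (hbdd : BddAbove (Set.range fun k : ℕ => ‖L ^ k‖ / ρ ^ k))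
    (τ : ℝ) (hτ : τ = ⨆ k : ℕ, ‖L ^ k‖ / ρ ^ k)
    (hK : ‖K' - K‖ ≤ (1 - ρ) / (2 * τ * ‖B‖)) :
    ∀ k : ℕ, ‖(A + B ∘L K') ^ k‖ ≤ τ * ((1 + ρ) / 2) ^ k := by
  obtain ⟨hρ0, hρ1⟩ := hρ
  -- basic bound on powers of L
  have hτk : ∀ k : ℕ, ‖L ^ k‖ ≤ τ * ρ ^ k := by
    intro k
    have h := le_ciSup hbdd k
    rw [← hτ] at h
    have hpow : (0 : ℝ) < ρ ^ k := pow_pos hρ0 k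
    have := mul_le_mul_of_nonneg_right h hpow.le
    calc ‖L ^ k‖ = ‖L ^ k‖ / ρ ^ k * ρ ^ k := by field_simp
      _ ≤ τ * ρ ^ k := this
  have hτ0 : 0 ≤ τ := by
    have h := le_ciSup hbdd 0
    rw [← hτ] at h
    have : (0 : ℝ) ≤ ‖L ^ 0‖ / ρ ^ 0 := by positivity
    linarith
  set Δ := B ∘L (K' - K) with hΔdef
  have hP : A + B ∘L K' = L + Δ := by
    rw [hL, hΔdef, comp_sub]
    abel
  have hΔB : ‖Δ‖ ≤ ‖B‖ * ‖K' - K‖ := opNorm_comp_le _ _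
  have hτΔ : τ * ‖Δ‖ ≤ (1 - ρ) / 2 := by
    by_cases h : τ * ‖B‖ = 0
    · have h1 : τ * ‖Δ‖ ≤ τ * (‖B‖ * ‖K' - K‖) :=
        mul_le_mul_of_nonneg_left hΔB hτ0
      have h2 : τ * (‖B‖ * ‖K' - K‖) = (τ * ‖B‖) * ‖K' - K‖ := by ring
      rw [h2, h, zero_mul] at h1
      linarith
    · have hnn : 0 ≤ τ * ‖B‖ := mul_nonneg hτ0 (norm_nonneg _)
      have hpos : 0 < τ * ‖B‖ := lt_of_le_of_ne hnn (Ne.symm h)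
      have hτpos : 0 < τ := by
        rcases hτ0.lt_or_eq with h' | h'
        · exact h'
        · exfalso; rw [← h'] at hpos; simp at hpos
      have hBpos : 0 < ‖B‖ := by
        by_contra hB
        push_neg at hB
        have : ‖B‖ = 0 := le_antisymm hB (norm_nonneg _)
        rw [this, mul_zero] at hpos
        exact lt_irrefl _ hpos
      have h1 : τ * ‖Δ‖ ≤ (τ * ‖B‖) * ‖K' - K‖ := by
        calc τ * ‖Δ‖ ≤ τ * (‖B‖ * ‖K' - K‖) := mul_le_mul_of_nonneg_left hΔB hτ0
          _ = (τ * ‖B‖) * ‖K' - K‖ := by ring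
      have h2 : (τ * ‖B‖) * ‖K' - K‖ ≤ (τ * ‖B‖) * ((1 - ρ) / (2 * τ * ‖B‖)) :=
        mul_le_mul_of_nonneg_left hK hnn
      have h3 : (τ * ‖B‖) * ((1 - ρ) / (2 * τ * ‖B‖)) = (1 - ρ) / 2 := by
        field_simp
      linarith
  set σ : ℝ := ρ + τ * ‖Δ‖ with hσdef
  have hσρ : ρ ≤ σ := by
    have : 0 ≤ τ * ‖Δ‖ := mul_nonneg hτ0 (norm_nonneg _)
    linarith
  have hσ0 : 0 < σ := lt_of_lt_of_le hρ0 hσρ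
  have hσle : σ ≤ (1 + ρ) / 2 := by
    rw [hσdef]; linarith
  -- main estimate by strong induction
  have main : ∀ k : ℕ, ‖(L + Δ) ^ k‖ ≤ τ * σ ^ k := by
    intro k
    induction k using Nat.strong_induction_on with
    | _ k ih =>
      have hid := aux_pow_add_identity L Δ k
      have h1 : ‖(L + Δ) ^ k‖ ≤
          ‖L ^ k‖ + ∑ j ∈ Finset.range k, ‖L ^ (k - 1 - j) * (Δ * (L + Δ) ^ j)‖ := by
        rw [hid]
        exact (norm_add_le _ _).trans (add_le_add_right (norm_sum_le _ _) _)
      have h2 : ∀ j ∈ Finset.range k,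
          ‖L ^ (k - 1 - j) * (Δ * (L + Δ) ^ j)‖
            ≤ τ * ρ ^ (k - 1 - j) * (‖Δ‖ * (τ * σ ^ j)) := by
        intro j hj
        have hj' : j < k := Finset.mem_range.mp hj
        have hL1 := hτk (k - 1 - j)
        have hI := ih j hj'
        calc ‖L ^ (k - 1 - j) * (Δ * (L + Δ) ^ j)‖
            ≤ ‖L ^ (k - 1 - j)‖ * ‖Δ * (L + Δ) ^ j‖ := norm_mul_le _ _
          _ ≤ ‖L ^ (k - 1 - j)‖ * (‖Δ‖ * ‖(L + Δ) ^ j‖) := by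
              have := norm_mul_le Δ ((L + Δ) ^ j)
              exact mul_le_mul_of_nonneg_left this (norm_nonneg _)
          _ ≤ τ * ρ ^ (k - 1 - j) * (‖Δ‖ * (τ * σ ^ j)) := by
              apply mul_le_mul hL1
              · exact mul_le_mul_of_nonneg_left hI (norm_nonneg _)
              · positivity
              · positivity
      have h3 : ∑ j ∈ Finset.range k, ‖L ^ (k - 1 - j) * (Δ * (L + Δ) ^ j)‖
          ≤ ∑ j ∈ Finset.range k, τ * ρ ^ (k - 1 - j) * (‖Δ‖ * (τ * σ ^ j)) :=
        Finset.sum_le_sum h2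
      have hgeom : (∑ j ∈ Finset.range k, σ ^ j * ρ ^ (k - 1 - j)) * (σ - ρ)
          = σ ^ k - ρ ^ k := geom_sum₂_mul σ ρ k
      have h4 : ∑ j ∈ Finset.range k, τ * ρ ^ (k - 1 - j) * (‖Δ‖ * (τ * σ ^ j))
          = (∑ j ∈ Finset.range k, σ ^ j * ρ ^ (k - 1 - j)) * (σ - ρ) * τ := by
        rw [Finset.sum_mul, Finset.sum_mul]
        apply Finset.sum_congr rfl
        intro j _
        have hsub : σ - ρ = τ * ‖Δ‖ := by rw [hσdef]; ring
        rw [hsub]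
        ring
      have h5 : ‖(L + Δ) ^ k‖ ≤ τ * ρ ^ k + (σ ^ k - ρ ^ k) * τ := by
        have := hτk k
        calc ‖(L + Δ) ^ k‖
            ≤ ‖L ^ k‖ + ∑ j ∈ Finset.range k, τ * ρ ^ (k - 1 - j) * (‖Δ‖ * (τ * σ ^ j)) :=
              le_trans h1 (add_le_add_right h3 _)
          _ = ‖L ^ k‖ + (σ ^ k - ρ ^ k) * τ := by rw [h4, hgeom]
          _ ≤ τ * ρ ^ k + (σ ^ k - ρ ^ k) * τ := by linarith
      calc ‖(L + Δ) ^ k‖ ≤ τ * ρ ^ k + (σ ^ k - ρ ^ k) * τ := h5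
        _ = τ * σ ^ k := by ring
  intro k
  rw [hP]
  calc ‖(L + Δ) ^ k‖ ≤ τ * σ ^ k := main k
    _ ≤ τ * ((1 + ρ) / 2) ^ k :=
      mul_le_mul_of_nonneg_left (pow_le_pow_left₀ hσ0.le hσle k) hτ0
end
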